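/- Let H₁, …, Hₙ be a line arrangement in general position on the torus ℝ²/ℤ², i.e. each Hᵢ is the image under the quotient map of an affine line in ℝ² with primitive direction hᵢ ∈ ℤ², no point of the torus lies on three of the lines, any two distinct lines whose directions are parallel (hᵢ = ±hⱼ) are disjoint, and not all of the directions are pairwise parallel. Let v be the number of intersection points (points of the torus lying on at least two of the lines) and let f be the number of connected components of the complement (ℝ²/ℤ²) \ (H₁ ∪ … ∪ Hₙ). Then v = f. -/

import Mathlib

/-- The integer lattice `ℤ² ⊆ ℝ²` as an additive subgroup of `Fin 2 → ℝ`. -/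
def intLattice : AddSubgroup (Fin 2 → ℝ) where
  carrier := {x | ∀ i, ∃ m : ℤ, x i = (m : ℝ)}
  zero_mem' := fun i => ⟨0, by simp⟩
  add_mem' := by
    intro a b ha hb i
    obtain ⟨p, hp⟩ := ha i
    obtain ⟨q, hq⟩ := hb i
    exact ⟨p + q, by simp [hp, hq]⟩
  neg_mem' := by
    intro a ha i
    obtain ⟨p, hp⟩ := ha i
    exact ⟨-p, by simp [hp]⟩

/-- The torus `ℝ²/ℤ²` (with the quotient topology). -/
abbrev Torus2 : Type := (Fin 2 → ℝ) ⧸ intLattice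

/-- The quotient map `π : ℝ² → ℝ²/ℤ²`. -/
def torusMk : (Fin 2 → ℝ) → Torus2 := QuotientAddGroup.mk

/-- The closed geodesic (line) on the torus with base point `p ∈ ℝ²` and direction
`u ∈ ℤ²`: the image `π({p + t·u : t ∈ ℝ})`. -/
def torusGeodesic (p : Fin 2 → ℝ) (u : Fin 2 → ℤ) : Set Torus2 :=
  torusMk '' {x : Fin 2 → ℝ | ∃ t : ℝ, x = p + t • (fun i => (u i : ℝ))}
noncomputable section
namespace S3
open Set

abbrev V2 := Fin 2 → ℝ

/-- the perpendicular linear functional of an integer vector -/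
def ee (a : Fin 2 → ℤ) (x : V2) : ℝ := a 1 * x 0 - a 0 * x 1

/-- a generic linear functional (irrational slope) -/
def lin (x : V2) : ℝ := x 0 + Real.sqrt 2 * x 1

/-- real cast of an integer vector -/
def rv (a : Fin 2 → ℤ) : V2 := fun k => (a k : ℝ)

lemma ee_add (a : Fin 2 → ℤ) (x y : V2) : ee a (x + y) = ee a x + ee a y := by
  simp [ee]; ring

lemma ee_sub (a : Fin 2 → ℤ) (x y : V2) : ee a (x - y) = ee a x - ee a y := by
  simp [ee]; ring

lemma ee_smul (a : Fin 2 → ℤ) (t : ℝ) (x : V2) : ee a (t • x) = t * ee a x := by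
  simp [ee]; ring

lemma ee_rv_self (a : Fin 2 → ℤ) : ee a (rv a) = 0 := by
  simp [ee, rv]; ring

lemma continuous_ee (a : Fin 2 → ℤ) : Continuous (ee a) := by
  unfold ee; fun_prop

lemma continuous_lin : Continuous lin := by
  unfold lin; fun_prop

lemma lin_add (x y : V2) : lin (x + y) = lin x + lin y := by simp [lin]; ring

lemma lin_sub (x y : V2) : lin (x - y) = lin x - lin y := by simp [lin]; ring

lemma lin_smul (t : ℝ) (x : V2) : lin (t • x) = t * lin x := by simp [lin]; ring

lemma mem_intLattice {x : V2} : x ∈ intLattice ↔ ∀ i, ∃ m : ℤ, x i = (m : ℝ) :=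
  Iff.rfl

lemma rv_mem_intLattice (a : Fin 2 → ℤ) : rv a ∈ intLattice :=
  fun i => ⟨a i, rfl⟩

lemma ee_int {a : Fin 2 → ℤ} {x : V2} (hx : x ∈ intLattice) :
    ∃ m : ℤ, ee a x = (m : ℝ) := by
  obtain ⟨m0, hm0⟩ := hx 0
  obtain ⟨m1, hm1⟩ := hx 1
  exact ⟨a 1 * m0 - a 0 * m1, by simp [ee, hm0, hm1]⟩

lemma prim_ne_zero {a : Fin 2 → ℤ} (ha : Int.gcd (a 0) (a 1) = 1) :
    a 0 ≠ 0 ∨ a 1 ≠ 0 := by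
  by_contra hc
  push_neg at hc
  simp [hc.1, hc.2] at ha

lemma lin_rv_ne {a : Fin 2 → ℤ} (ha : Int.gcd (a 0) (a 1) = 1) : lin (rv a) ≠ 0 := by
  intro h0
  rcases eq_or_ne (a 1) 0 with h1 | h1
  · rcases prim_ne_zero ha with h2 | h2
    · simp [lin, rv, h1] at h0
      exact h2 (by exact_mod_cast h0)
    · exact h2 h1
  · apply irrational_sqrt_two
    have : (Real.sqrt 2) = ((-(a 0) : ℚ) / (a 1 : ℚ) : ℚ) := by
      have ha1 : ((a 1 : ℝ)) ≠ 0 := by exact_mod_cast h1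
      push_cast
      field_simp
      simp [lin, rv] at h0
      linarith
    exact ⟨_, this.symm⟩

/-- kernel of `ee a` is spanned by `a` -/
lemma ee_ker {a : Fin 2 → ℤ} (ha : Int.gcd (a 0) (a 1) = 1) {r : V2}
    (hr : ee a r = 0) : ∃ t : ℝ, r = t • rv a := by
  simp only [ee] at hr
  rcases prim_ne_zero ha with h0 | h0
  · have h0' : ((a 0 : ℝ)) ≠ 0 := by exact_mod_cast h0
    refine ⟨r 0 / a 0, ?_⟩
    funext k
    fin_cases k <;> simp only [Pi.smul_apply, smul_eq_mul, rv, Fin.zero_eta, Fin.mk_one, Fin.isValue]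
    · field_simp
    · field_simp
      linarith
  · have h0' : ((a 1 : ℝ)) ≠ 0 := by exact_mod_cast h0
    refine ⟨r 1 / a 1, ?_⟩
    funext k
    fin_cases k <;> simp only [Pi.smul_apply, smul_eq_mul, rv, Fin.zero_eta, Fin.mk_one, Fin.isValue]
    · field_simp
      linarith
    · field_simp

/-- two primitive integer vectors with zero determinant are equal up to sign -/
lemma prim_parallel {a b : Fin 2 → ℤ} (ha : Int.gcd (a 0) (a 1) = 1)
    (hb : Int.gcd (b 0) (b 1) = 1) (hd : a 0 * b 1 - a 1 * b 0 = 0) :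
    a = b ∨ a = -b := by
  have hca : IsCoprime (a 0) (a 1) := Int.isCoprime_iff_gcd_eq_one.2 ha
  have hcb : IsCoprime (b 0) (b 1) := Int.isCoprime_iff_gcd_eq_one.2 hb
  have hd' : a 0 * b 1 = a 1 * b 0 := by linarith
  have h1 : a 0 ∣ b 0 := hca.dvd_of_dvd_mul_left ⟨b 1, by linarith⟩
  have h2 : b 0 ∣ a 0 := hcb.dvd_of_dvd_mul_left ⟨a 1, by linarith⟩
  have hassoc : b 0 = a 0 ∨ b 0 = -(a 0) :=
    Int.associated_iff.1 (associated_of_dvd_dvd h2 h1)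
  rcases eq_or_ne (a 0) 0 with hz | hz
  · have hbz : b 0 = 0 := by omega
    have ha1 : a 1 = 1 ∨ a 1 = -1 := by
      rw [hz] at ha; simp [Int.gcd] at ha; omega
    have hb1 : b 1 = 1 ∨ b 1 = -1 := by
      rw [hbz] at hb; simp [Int.gcd] at hb; omega
    rcases ha1 with h | h <;> rcases hb1 with h' | h'
    · left; funext k; fin_cases k <;> simp [hz, hbz, h, h']
    · right; funext k; fin_cases k <;> simp [hz, hbz, h, h']
    · right; funext k; fin_cases k <;> simp [hz, hbz, h, h']
    · left; funext k; fin_cases k <;> simp [hz, hbz, h, h']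
  · rcases hassoc with h | h
    · left
      have h3 : a 0 * b 1 = a 0 * a 1 := by rw [h] at hd'; linarith
      have : b 1 = a 1 := mul_left_cancel₀ hz h3
      funext k; fin_cases k <;> simp [h, this]
    · right
      have h3 : a 0 * b 1 = a 0 * (-(a 1)) := by rw [h] at hd'; linarith
      have : b 1 = -(a 1) := mul_left_cancel₀ hz h3
      funext k; fin_cases k <;> simp [h, this] <;> omega

end S3
namespace S3
open Set

lemma torusMk_eq {x y : V2} : torusMk x = torusMk y ↔ y - x ∈ intLattice := by
  rw [torusMk, QuotientAddGroup.eq, neg_add_eq_sub]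

lemma torusMk_add_mem {x w : V2} (hw : w ∈ intLattice) :
    torusMk (x + w) = torusMk x := by
  rw [torusMk_eq]
  have : x - (x + w) = -w := by abel
  rw [this]
  exact neg_mem hw

lemma torusMk_surjective : Function.Surjective torusMk :=
  Quotient.exists_rep

/-- membership in a geodesic, in terms of the perpendicular functional -/
lemma mem_geodesic {a : Fin 2 → ℤ} (ha : Int.gcd (a 0) (a 1) = 1) (q x : V2) :
    torusMk x ∈ torusGeodesic q a ↔ ∃ m : ℤ, ee a (x - q) = (m : ℝ) := by
  constructor
  · rintro ⟨y, ⟨t, rfl⟩, hyx⟩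
    have hrv : (fun i => ((a i : ℝ))) = rv a := rfl
    rw [hrv] at hyx
    have hxy : x - (q + t • rv a) ∈ intLattice := torusMk_eq.1 hyx
    obtain ⟨m, hm⟩ := ee_int (a := a) hxy
    refine ⟨m, ?_⟩
    have hx : x - q = (x - (q + t • rv a)) + t • rv a := by abel
    rw [hx, ee_add, hm, ee_smul, ee_rv_self]
    ring
  · rintro ⟨m, hm⟩
    obtain ⟨u, v, huv⟩ := Int.isCoprime_iff_gcd_eq_one.2 ha
    set wz : Fin 2 → ℤ := ![m * v, -(m * u)] with hwz
    have hew : ee a (rv wz) = (m : ℝ) := by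
      have hz0 : wz 0 = m * v := rfl
      have hz1 : wz 1 = -(m * u) := rfl
      have huv' : ((u : ℝ)) * a 0 + v * a 1 = 1 := by exact_mod_cast huv
      simp only [ee, rv, hz0, hz1]
      push_cast
      linear_combination (m : ℝ) * huv' 
    have hker : ee a (x - q - rv wz) = 0 := by
      rw [ee_sub, hm, hew]; ring
    obtain ⟨t, ht⟩ := ee_ker ha hker
    refine ⟨q + t • rv a, ⟨t, rfl⟩, ?_⟩
    show torusMk (q + t • rv a) = torusMk x
    rw [torusMk_eq]
    have hgoal : x - (q + t • rv a) = rv wz := by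
      rw [← ht]; abel
    rw [hgoal]
    exact rv_mem_intLattice wz

section Arrangement

variable {n : ℕ} (h : Fin n → Fin 2 → ℤ) (p : Fin n → Fin 2 → ℝ)

/-- the lift of the complement of the arrangement -/
def Ut : Set V2 := {x | ∀ i, ∀ m : ℤ, ee (h i) (x - p i) ≠ (m : ℝ)}

variable {L : Fin n → Set Torus2}

lemma mem_L_iff (hL : ∀ i, L i = torusGeodesic (p i) (h i))
    (hprim : ∀ i, Int.gcd (h i 0) (h i 1) = 1) (i : Fin n) (x : V2) :
    torusMk x ∈ L i ↔ ∃ m : ℤ, ee (h i) (x - p i) = (m : ℝ) := by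
  rw [hL i]; exact mem_geodesic (hprim i) _ _

lemma mem_Ut_iff (hL : ∀ i, L i = torusGeodesic (p i) (h i))
    (hprim : ∀ i, Int.gcd (h i 0) (h i 1) = 1) (x : V2) :
    x ∈ Ut h p ↔ torusMk x ∈ (⋃ i, L i)ᶜ := by
  simp only [Ut, mem_setOf_eq, mem_compl_iff, mem_iUnion]
  push_neg
  constructor
  · intro hx i hi
    obtain ⟨m, hm⟩ := (mem_L_iff h p hL hprim i x).1 hi
    exact hx i m hm
  · intro hx i m hm
    exact hx i ((mem_L_iff h p hL hprim i x).2 ⟨m, hm⟩)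

lemma isOpen_Ut : IsOpen (Ut h p) := by
  have : (Ut h p)ᶜ = ⋃ i, (fun x => ee (h i) (x - p i)) ⁻¹' (Set.range ((↑) : ℤ → ℝ)) := by
    ext x
    simp only [Ut, mem_compl_iff, mem_setOf_eq, mem_iUnion, mem_preimage, mem_range]
    push_neg
    constructor
    · rintro ⟨i, m, hm⟩; exact ⟨i, m, hm.symm⟩
    · rintro ⟨i, m, hm⟩; exact ⟨i, m, hm.symm⟩
  rw [← isClosed_compl_iff, ← compl_compl (Ut h p)ᶜ]
  simp only [compl_compl]
  rw [this]
  apply isClosed_iUnion_of_finite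
  intro i
  exact IsClosed.preimage ((continuous_ee (h i)).comp (continuous_id.sub continuous_const))
    Int.isClosedEmbedding_coe_real.isClosed_range

lemma Ut_add_lattice {x w : V2} (hw : w ∈ intLattice) (hx : x ∈ Ut h p) :
    x + w ∈ Ut h p := by
  intro i m hm
  obtain ⟨k, hk⟩ := ee_int (a := h i) hw
  apply hx i (m - k)
  have : x - p i = (x + w - p i) - w := by abel
  rw [this, ee_sub, hm, hk]
  push_cast
  ring

end Arrangement
end S3
namespace S3
open Set

/-- two independent `ee` functionals jointly injective -/
lemma ee_pair_inj {a b : Fin 2 → ℤ} (hd : a 0 * b 1 - a 1 * b 0 ≠ 0) {w : V2}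
    (h1 : ee a w = 0) (h2 : ee b w = 0) : w = 0 := by
  have hdr : ((a 0 : ℝ) * b 1 - a 1 * b 0) ≠ 0 := by exact_mod_cast hd
  simp only [ee] at h1 h2
  funext k
  fin_cases k
  · show w 0 = 0
    have hz : ((a 0 : ℝ) * b 1 - a 1 * b 0) * w 0 = 0 := by linear_combination (-(b 0 : ℝ)) * h1 + (a 0 : ℝ) * h2
    exact (mul_eq_zero.1 hz).resolve_left hdr
  · show w 1 = 0
    have hz : ((a 0 : ℝ) * b 1 - a 1 * b 0) * w 1 = 0 := by linear_combination (-(b 1 : ℝ)) * h1 + (a 1 : ℝ) * h2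
    exact (mul_eq_zero.1 hz).resolve_left hdr

lemma abs_ee_le (a : Fin 2 → ℤ) (w : V2) :
    |ee a w| ≤ |(a 1 : ℝ)| * |w 0| + |(a 0 : ℝ)| * |w 1| := by
  simp only [ee]
  calc |(a 1 : ℝ) * w 0 - a 0 * w 1| ≤ |(a 1 : ℝ) * w 0| + |(a 0 : ℝ) * w 1| :=
        abs_sub _ _
    _ = |(a 1 : ℝ)| * |w 0| + |(a 0 : ℝ)| * |w 1| := by rw [abs_mul, abs_mul]

section Arrangement

variable {n : ℕ} {h : Fin n → Fin 2 → ℤ} {p : Fin n → Fin 2 → ℝ}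
variable {L : Fin n → Set Torus2}

/-- the unit box -/
def box : Set V2 := {y | ∀ k, y k ∈ Ico (0:ℝ) 1}

lemma exists_box_rep (x : Torus2) : ∃ y ∈ box, torusMk y = x := by
  obtain ⟨z, rfl⟩ := torusMk_surjective x
  refine ⟨fun k => Int.fract (z k), fun k => ⟨Int.fract_nonneg _, Int.fract_lt_one _⟩, ?_⟩
  rw [torusMk_eq]
  intro k
  refine ⟨⌊z k⌋, ?_⟩
  show z k - Int.fract (z k) = (⌊z k⌋ : ℝ)
  exact Int.self_sub_fract _

lemma finite_inter (hL : ∀ i, L i = torusGeodesic (p i) (h i))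
    (hprim : ∀ i, Int.gcd (h i 0) (h i 1) = 1) {i j : Fin n}
    (hd : h i 0 * h j 1 - h i 1 * h j 0 ≠ 0) : (L i ∩ L j).Finite := by
  set W : Set V2 := box ∩ {y | (∃ m : ℤ, ee (h i) (y - p i) = (m : ℝ)) ∧
      (∃ m : ℤ, ee (h j) (y - p j) = (m : ℝ))} with hW
  have hsub : L i ∩ L j ⊆ torusMk '' W := by
    rintro x ⟨hxi, hxj⟩
    obtain ⟨y, hyb, rfl⟩ := exists_box_rep x
    exact ⟨y, ⟨hyb, (mem_L_iff h p hL hprim i y).1 hxi, (mem_L_iff h p hL hprim j y).1 hxj⟩, rfl⟩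
  have hWfin : W.Finite := by
    set f : V2 → ℤ × ℤ := fun y =>
      (round (ee (h i) (y - p i)), round (ee (h j) (y - p j))) with hf
    have hval : ∀ y ∈ W, ((f y).1 : ℝ) = ee (h i) (y - p i) ∧
        ((f y).2 : ℝ) = ee (h j) (y - p j) := by
      rintro y ⟨-, ⟨mi, hmi⟩, ⟨mj, hmj⟩⟩
      constructor
      · rw [hf]; simp only; rw [hmi, round_intCast]
      · rw [hf]; simp only; rw [hmj, round_intCast]
    have hinj : InjOn f W := by
      intro y hy y' hy' hEq
      obtain ⟨hy1, hy2⟩ := hval y hy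
      obtain ⟨hy1', hy2'⟩ := hval y' hy'
      have e1 : ee (h i) (y - p i) = ee (h i) (y' - p i) := by
        rw [← hy1, ← hy1', hEq]
      have e2 : ee (h j) (y - p j) = ee (h j) (y' - p j) := by
        rw [← hy2, ← hy2', hEq]
      have d1 : ee (h i) (y - y') = 0 := by
        have : y - y' = (y - p i) - (y' - p i) := by abel
        rw [this, ee_sub, e1, sub_self]
      have d2 : ee (h j) (y - y') = 0 := by
        have : y - y' = (y - p j) - (y' - p j) := by abel
        rw [this, ee_sub, e2, sub_self]
      have := ee_pair_inj hd d1 d2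
      have : y - y' = 0 := this
      exact sub_eq_zero.1 this
    set c1 : ℝ := |(h i 1 : ℝ)| * (1 + |p i 0|) + |(h i 0 : ℝ)| * (1 + |p i 1|) with hc1
    set c2 : ℝ := |(h j 1 : ℝ)| * (1 + |p j 0|) + |(h j 0 : ℝ)| * (1 + |p j 1|) with hc2
    have himg : f '' W ⊆ (Icc (-⌈c1⌉) ⌈c1⌉) ×ˢ (Icc (-⌈c2⌉) ⌈c2⌉) := by
      rintro - ⟨y, hy, rfl⟩
      have hbox := hy.1
      obtain ⟨h1, h2⟩ := hval y hy
      have key : ∀ (k : Fin n) (c : ℝ), ((round (ee (h k) (y - p k)) : ℝ)) = ee (h k) (y - p k) →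
          c = |(h k 1 : ℝ)| * (1 + |p k 0|) + |(h k 0 : ℝ)| * (1 + |p k 1|) →
          round (ee (h k) (y - p k)) ∈ Icc (-⌈c⌉) ⌈c⌉ := by
        intro k c hrk hc
        have hb : |ee (h k) (y - p k)| ≤ c := by
          refine le_trans (abs_ee_le _ _) ?_
          rw [hc]
          have h0 : |y 0 - p k 0| ≤ 1 + |p k 0| := by
            have := hbox 0
            rw [abs_sub_comm]
            calc |p k 0 - y 0| ≤ |p k 0| + |y 0| := abs_sub _ _
              _ ≤ |p k 0| + 1 := by
                  have : |y 0| ≤ 1 := by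
                    rw [abs_le]; constructor <;> [linarith [(hbox 0).1]; linarith [(hbox 0).2]]
                  linarith
              _ = 1 + |p k 0| := by ring
          have h1' : |y 1 - p k 1| ≤ 1 + |p k 1| := by
            have := hbox 1
            rw [abs_sub_comm]
            calc |p k 1 - y 1| ≤ |p k 1| + |y 1| := abs_sub _ _
              _ ≤ |p k 1| + 1 := by
                  have : |y 1| ≤ 1 := by
                    rw [abs_le]; constructor <;> [linarith [(hbox 1).1]; linarith [(hbox 1).2]]
                  linarith
              _ = 1 + |p k 1| := by ring
          have hp0 : (y - p k) 0 = y 0 - p k 0 := rfl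
          have hp1 : (y - p k) 1 = y 1 - p k 1 := rfl
          rw [hp0, hp1]
          have ha0 : (0:ℝ) ≤ |(h k 1 : ℝ)| := abs_nonneg _
          have ha1 : (0:ℝ) ≤ |(h k 0 : ℝ)| := abs_nonneg _
          nlinarith [abs_nonneg (y 0 - p k 0), abs_nonneg (y 1 - p k 1)]
        have habs : |((round (ee (h k) (y - p k)) : ℝ))| ≤ c := by rw [hrk]; exact hb
        rw [abs_le] at habs
        constructor
        · have : (-⌈c⌉ : ℝ) ≤ (round (ee (h k) (y - p k)) : ℝ) := by
            calc (-⌈c⌉ : ℝ) ≤ -c := by simp only [neg_le_neg_iff]; exact Int.le_ceil c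
              _ ≤ _ := habs.1
          exact_mod_cast this
        · have : ((round (ee (h k) (y - p k)) : ℝ)) ≤ (⌈c⌉ : ℝ) :=
            le_trans habs.2 (Int.le_ceil c)
          exact_mod_cast this
      exact ⟨key i _ h1 rfl, key j _ h2 rfl⟩
    have hfin : (f '' W).Finite :=
      Finite.subset (Finite.prod (finite_Icc _ _) (finite_Icc _ _)) himg
    exact Finite.of_finite_image hfin hinj
  exact Finite.subset (hWfin.image torusMk) hsub

/-- the vertex set is finite -/
lemma finite_vertexSet (hL : ∀ i, L i = torusGeodesic (p i) (h i))
    (hprim : ∀ i, Int.gcd (h i 0) (h i 1) = 1)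
    (hpar : ∀ i j, i ≠ j → (h i = h j ∨ h i = -h j) → Disjoint (L i) (L j)) :
    {x : Torus2 | ∃ i j, i ≠ j ∧ x ∈ L i ∧ x ∈ L j}.Finite := by
  have hsub : {x : Torus2 | ∃ i j, i ≠ j ∧ x ∈ L i ∧ x ∈ L j} ⊆
      ⋃ q : Fin n × Fin n, (if q.1 = q.2 then (∅ : Set Torus2) else L q.1 ∩ L q.2) := by
    rintro x ⟨i, j, hij, hxi, hxj⟩
    refine mem_iUnion.2 ⟨(i, j), ?_⟩
    simp only [if_neg hij]
    exact ⟨hxi, hxj⟩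
  refine Finite.subset (Set.finite_iUnion ?_) hsub
  rintro ⟨i, j⟩
  by_cases hij : i = j
  · simp [hij]
  · simp only [if_neg hij]
    by_cases hp : h i = h j ∨ h i = -h j
    · rw [Set.disjoint_iff_inter_eq_empty.1 (hpar i j hij hp)]
      exact finite_empty
    · refine finite_inter hL hprim ?_
      intro hd
      rcases prim_parallel (hprim i) (hprim j) hd with h1 | h1
      · exact hp (Or.inl h1)
      · exact hp (Or.inr h1)

end Arrangement
end S3
namespace S3
open Set

/-- a union of components of an open set is open: complement form -/
lemma diff_connectedComponentIn_isOpen {α : Type*} [TopologicalSpace α]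
    [LocallyConnectedSpace α] {F : Set α} (hF : IsOpen F) (S : Set α)
    (hS : ∀ y ∈ F \ S, Disjoint (connectedComponentIn F y) S) :
    IsOpen (F \ S) := by
  have : F \ S = ⋃ y ∈ F \ S, connectedComponentIn F y := by
    apply Subset.antisymm
    · intro y hy
      exact mem_biUnion hy (mem_connectedComponentIn hy.1)
    · intro x hx
      simp only [mem_iUnion] at hx
      obtain ⟨y, hy, hxy⟩ := hx
      exact ⟨connectedComponentIn_subset F y hxy, fun hxS => (hS y hy).ne_of_mem hxy hxS rfl⟩
  rw [this]
  exact isOpen_biUnion fun y _ => hF.connectedComponentIn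

lemma ee_lip (a : Fin 2 → ℤ) (x y : V2) :
    |ee a x - ee a y| ≤ (|(a 1 : ℝ)| + |(a 0 : ℝ)|) * ‖x - y‖ := by
  rw [← ee_sub]
  refine le_trans (abs_ee_le _ _) ?_
  have h0 : |(x - y) 0| ≤ ‖x - y‖ := by
    have := norm_le_pi_norm (x - y) 0
    rwa [Real.norm_eq_abs] at this
  have h1 : |(x - y) 1| ≤ ‖x - y‖ := by
    have := norm_le_pi_norm (x - y) 1
    rwa [Real.norm_eq_abs] at this
  have n0 : (0:ℝ) ≤ |(a 1 : ℝ)| := abs_nonneg _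
  have n1 : (0:ℝ) ≤ |(a 0 : ℝ)| := abs_nonneg _
  nlinarith [abs_nonneg ((x-y) 0), abs_nonneg ((x-y) 1)]

section Arrangement

variable {n : ℕ} {h : Fin n → Fin 2 → ℤ} {p : Fin n → Fin 2 → ℝ}

/-- on a preconnected subset of the complement, each `ee` functional stays strictly
between two consecutive integers -/
lemma ee_interval {C : Set V2} (hC : IsPreconnected C) (hCU : C ⊆ Ut h p)
    {x₀ : V2} (hx0 : x₀ ∈ C) (i : Fin n) : ∀ x ∈ C,
    ((⌊ee (h i) (x₀ - p i)⌋ : ℝ) < ee (h i) (x - p i) ∧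
      ee (h i) (x - p i) < (⌊ee (h i) (x₀ - p i)⌋ : ℝ) + 1) := by
  set g : V2 → ℝ := fun x => ee (h i) (x - p i) with hg
  have hgc : ContinuousOn g C :=
    (((continuous_ee (h i)).comp (continuous_id.sub continuous_const))).continuousOn
  set K : ℤ := ⌊g x₀⌋ with hK
  have hne : ∀ x ∈ C, ∀ m : ℤ, g x ≠ (m : ℝ) := fun x hx m => hCU hx i m
  have hK0 : (K : ℝ) < g x₀ := by
    rcases lt_or_eq_of_le (Int.floor_le (g x₀)) with hlt | heq
    · exact hlt
    · exact absurd heq.symm (hne x₀ hx0 K)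
  intro x hx
  constructor
  · by_contra hcon
    push_neg at hcon
    have : (K : ℝ) ∈ Icc (g x) (g x₀) := ⟨hcon, le_of_lt hK0⟩
    obtain ⟨y, hy, hgy⟩ := hC.intermediate_value hx hx0 hgc this
    exact hne y hy K hgy
  · by_contra hcon
    push_neg at hcon
    have hx0up : g x₀ < (K : ℝ) + 1 := Int.lt_floor_add_one _
    have : ((K + 1 : ℤ) : ℝ) ∈ Icc (g x₀) (g x) := by
      push_cast
      exact ⟨le_of_lt hx0up, hcon⟩
    obtain ⟨y, hy, hgy⟩ := hC.intermediate_value hx0 hx hgc this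
    exact hne y hy (K + 1) hgy

/-- a set on which two independent `ee` functionals are bounded is itself bounded -/
lemma bounded_of_ee_bounds {i j : Fin n} (hd : h i 0 * h j 1 - h i 1 * h j 0 ≠ 0)
    {C : Set V2} {Bi Bj : ℝ}
    (hbi : ∀ x ∈ C, |ee (h i) x| ≤ Bi) (hbj : ∀ x ∈ C, |ee (h j) x| ≤ Bj) :
    Bornology.IsBounded C := by
  set a := h i with ha
  set b := h j with hb
  have hdr : ((a 0 : ℝ) * b 1 - a 1 * b 0) ≠ 0 := by exact_mod_cast hd
  have hdabs : 0 < |(a 0 : ℝ) * b 1 - a 1 * b 0| := abs_pos.2 hdr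
  rw [isBounded_iff_forall_norm_le]
  refine ⟨(|(b 0:ℝ)| * Bi + |(a 0:ℝ)| * Bj + |(b 1:ℝ)| * Bi + |(a 1:ℝ)| * Bj)
      / |(a 0 : ℝ) * b 1 - a 1 * b 0|, ?_⟩
  intro x hx
  have h1 := hbi x hx
  have h2 := hbj x hx
  have key0 : |((a 0 : ℝ) * b 1 - a 1 * b 0) * x 0| ≤ |(b 0:ℝ)| * Bi + |(a 0:ℝ)| * Bj := by
    have hid : ((a 0 : ℝ) * b 1 - a 1 * b 0) * x 0 =
        (-(b 0 : ℝ)) * (ee a x) + (a 0 : ℝ) * (ee b x) := by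
      simp only [ee]; ring
    rw [hid]
    calc |(-(b 0 : ℝ)) * (ee a x) + (a 0 : ℝ) * (ee b x)|
        ≤ |(-(b 0 : ℝ)) * (ee a x)| + |(a 0 : ℝ) * (ee b x)| := abs_add_le _ _
      _ = |(b 0:ℝ)| * |ee a x| + |(a 0:ℝ)| * |ee b x| := by rw [abs_mul, abs_mul, abs_neg]
      _ ≤ |(b 0:ℝ)| * Bi + |(a 0:ℝ)| * Bj := by
          have := abs_nonneg (b 0 : ℝ)
          have := abs_nonneg (a 0 : ℝ)
          have := abs_nonneg (ee a x)
          have := abs_nonneg (ee b x)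
          nlinarith
  have key1 : |((a 0 : ℝ) * b 1 - a 1 * b 0) * x 1| ≤ |(b 1:ℝ)| * Bi + |(a 1:ℝ)| * Bj := by
    have hid : ((a 0 : ℝ) * b 1 - a 1 * b 0) * x 1 =
        (-(b 1 : ℝ)) * (ee a x) + (a 1 : ℝ) * (ee b x) := by
      simp only [ee]; ring
    rw [hid]
    calc |(-(b 1 : ℝ)) * (ee a x) + (a 1 : ℝ) * (ee b x)|
        ≤ |(-(b 1 : ℝ)) * (ee a x)| + |(a 1 : ℝ) * (ee b x)| := abs_add_le _ _
      _ = |(b 1:ℝ)| * |ee a x| + |(a 1:ℝ)| * |ee b x| := by rw [abs_mul, abs_mul, abs_neg]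
      _ ≤ |(b 1:ℝ)| * Bi + |(a 1:ℝ)| * Bj := by
          have := abs_nonneg (b 1 : ℝ)
          have := abs_nonneg (a 1 : ℝ)
          have := abs_nonneg (ee a x)
          have := abs_nonneg (ee b x)
          nlinarith
  have hB : (0:ℝ) ≤ |(b 0:ℝ)| * Bi + |(a 0:ℝ)| * Bj := by
    have h3 := abs_nonneg (ee a x)
    have h4 := abs_nonneg (ee b x)
    have h5 : (0:ℝ) ≤ Bi := le_trans h3 h1
    have h6 : (0:ℝ) ≤ Bj := le_trans h4 h2
    have := abs_nonneg (b 0 : ℝ); have := abs_nonneg (a 0 : ℝ)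
    nlinarith
  have hB' : (0:ℝ) ≤ |(b 1:ℝ)| * Bi + |(a 1:ℝ)| * Bj := by
    have h3 := abs_nonneg (ee a x)
    have h4 := abs_nonneg (ee b x)
    have h5 : (0:ℝ) ≤ Bi := le_trans h3 h1
    have h6 : (0:ℝ) ≤ Bj := le_trans h4 h2
    have := abs_nonneg (b 1 : ℝ); have := abs_nonneg (a 1 : ℝ)
    nlinarith
  have hx0 : |x 0| ≤ (|(b 0:ℝ)| * Bi + |(a 0:ℝ)| * Bj) / |(a 0 : ℝ) * b 1 - a 1 * b 0| := by
    rw [le_div_iff₀ hdabs]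
    calc |x 0| * |(a 0 : ℝ) * b 1 - a 1 * b 0|
        = |((a 0 : ℝ) * b 1 - a 1 * b 0) * x 0| := by rw [abs_mul]; ring
      _ ≤ _ := key0
  have hx1 : |x 1| ≤ (|(b 1:ℝ)| * Bi + |(a 1:ℝ)| * Bj) / |(a 0 : ℝ) * b 1 - a 1 * b 0| := by
    rw [le_div_iff₀ hdabs]
    calc |x 1| * |(a 0 : ℝ) * b 1 - a 1 * b 0|
        = |((a 0 : ℝ) * b 1 - a 1 * b 0) * x 1| := by rw [abs_mul]; ring
      _ ≤ _ := key1
  have : ∀ k : Fin 2, ‖x k‖ ≤ (|(b 0:ℝ)| * Bi + |(a 0:ℝ)| * Bj + |(b 1:ℝ)| * Bi + |(a 1:ℝ)| * Bj)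
      / |(a 0 : ℝ) * b 1 - a 1 * b 0| := by
    intro k
    rw [Real.norm_eq_abs]
    fin_cases k
    · refine le_trans hx0 ((div_le_div_iff_of_pos_right hdabs).2 ?_)
      linarith
    · refine le_trans hx1 ((div_le_div_iff_of_pos_right hdabs).2 ?_)
      linarith
  exact pi_norm_le_iff_of_nonneg (le_trans (abs_nonneg _) (this 0)) |>.2 this

/-- translation of a connected component of `Ut` by a lattice vector -/
lemma connectedComponentIn_add_lattice {w : V2} (hw : w ∈ intLattice) (x : V2) :
    (fun y => y + w) '' connectedComponentIn (Ut h p) x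
      = connectedComponentIn (Ut h p) (x + w) := by
  by_cases hx : x ∈ Ut h p
  · have hxw : x + w ∈ Ut h p := Ut_add_lattice h p hw hx
    apply Subset.antisymm
    · apply IsPreconnected.subset_connectedComponentIn
      · exact isPreconnected_connectedComponentIn.image _
          (continuous_id.add continuous_const).continuousOn
      · exact ⟨x, mem_connectedComponentIn hx, rfl⟩
      · rintro - ⟨y, hy, rfl⟩
        exact Ut_add_lattice h p hw (connectedComponentIn_subset _ _ hy)
    · intro y hy
      refine ⟨y - w, ?_, by simp⟩
      have key : (fun z => z + (-w)) '' connectedComponentIn (Ut h p) (x + w)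
          ⊆ connectedComponentIn (Ut h p) x := by
        apply IsPreconnected.subset_connectedComponentIn
        · exact isPreconnected_connectedComponentIn.image _
            (continuous_id.add continuous_const).continuousOn
        · exact ⟨x + w, mem_connectedComponentIn hxw, by simp⟩
        · rintro - ⟨z, hz, rfl⟩
          exact Ut_add_lattice h p (neg_mem hw) (connectedComponentIn_subset _ _ hz)
      have hyw : y - w = y + (-w) := by abel
      rw [hyw]
      exact key ⟨y, hy, rfl⟩
  · have hxw : x + w ∉ Ut h p := by
      intro hc
      have h2 := Ut_add_lattice h p (neg_mem hw) hc
      rw [add_neg_cancel_right] at h2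
      exact hx h2
    rw [connectedComponentIn_eq_empty hx, connectedComponentIn_eq_empty hxw, image_empty]

end Arrangement
end S3
namespace S3
open Set

lemma int_eq_of_close {m m' : ℤ} (hd : |(m:ℝ) - (m':ℝ)| < 1) : m = m' := by
  have : |((m - m' : ℤ) : ℝ)| < 1 := by push_cast; exact hd
  rw [← Int.cast_abs] at this
  have h2 : |m - m'| < 1 := by exact_mod_cast this
  rw [abs_lt] at h2
  omega

/-- open halfplanes bounded by lines are convex -/
lemma convex_side (a : Fin 2 → ℤ) (q : V2) (s m : ℝ) :
    Convex ℝ {x : V2 | 0 < s * (ee a (x - q) - m)} := by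
  intro x hx y hy α β hα hβ hαβ
  simp only [mem_setOf_eq] at hx hy ⊢
  have hid : α • x + β • y - q = α • (x - q) + β • (y - q) := by
    rw [smul_sub, smul_sub]
    rw [show α • x - α • q + (β • y - β • q) = α • x + β • y - (α • q + β • q) by abel]
    rw [← add_smul, hαβ, one_smul]
  have hval : ee a (α • x + β • y - q) = α * ee a (x - q) + β * ee a (y - q) := by
    rw [hid, ee_add, ee_smul, ee_smul]
  have hkey : s * (ee a (α • x + β • y - q) - m)
      = α * (s * (ee a (x - q) - m)) + β * (s * (ee a (y - q) - m)) := by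
    rw [hval]; linear_combination s * m * hαβ
  rw [hkey]
  rcases eq_or_lt_of_le hα with hα0 | hα0
  · rw [← hα0] at hαβ ⊢
    simp only [zero_mul, zero_add] at hαβ ⊢
    rw [hαβ, one_mul] at *
    simpa using hy
  · rcases eq_or_lt_of_le hβ with hβ0 | hβ0
    · rw [← hβ0] at hαβ ⊢
      simp only [zero_mul, add_zero] at hαβ ⊢
      rw [hαβ, one_mul] at *
      simpa using hx
    · have := mul_pos hα0 hx
      have := mul_pos hβ0 hy
      linarith

/-- the lifted line family of a single geodesic -/
def lineSet (a : Fin 2 → ℤ) (q : V2) : Set V2 := {x | ∃ m : ℤ, ee a (x - q) = (m:ℝ)}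

lemma isClosed_lineSet (a : Fin 2 → ℤ) (q : V2) : IsClosed (lineSet a q) := by
  have : lineSet a q = (fun x => ee a (x - q)) ⁻¹' (Set.range ((↑) : ℤ → ℝ)) := by
    ext x; simp only [lineSet, mem_setOf_eq, mem_preimage, mem_range]
    exact ⟨fun ⟨m, hm⟩ => ⟨m, hm.symm⟩, fun ⟨m, hm⟩ => ⟨m, hm.symm⟩⟩
  rw [this]
  exact IsClosed.preimage ((continuous_ee a).comp (continuous_id.sub continuous_const))
    Int.isClosedEmbedding_coe_real.isClosed_range

section Arrangement

variable {n : ℕ} {h : Fin n → Fin 2 → ℤ} {p : Fin n → Fin 2 → ℝ}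

/-- a good ball around a point: no other lines enter, and the active functionals move
by less than 1/2 -/
lemma ball_structure {z : V2} (good : Fin n → Prop)
    (hz : ∀ k, ¬ good k → ∀ m : ℤ, ee (h k) (z - p k) ≠ (m:ℝ)) :
    ∃ ε > 0, (∀ x, dist x z < ε → ∀ k, ¬ good k → ∀ m : ℤ, ee (h k) (x - p k) ≠ (m:ℝ)) ∧
      (∀ x, dist x z < ε → ∀ k, |ee (h k) (x - p k) - ee (h k) (z - p k)| < 1/2) := by
  classical
  -- avoid inactive lines
  set Z : Set V2 := ⋃ k : Fin n, (if good k then (∅ : Set V2) else lineSet (h k) (p k))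
    with hZ
  have hZclosed : IsClosed Z := by
    apply isClosed_iUnion_of_finite
    intro k
    by_cases hk : good k
    · simp [hk]
    · simp only [if_neg hk]; exact isClosed_lineSet _ _
  have hzZ : z ∉ Z := by
    intro hc
    rw [hZ] at hc
    obtain ⟨S, ⟨k, rfl⟩, hk⟩ := hc
    by_cases hg : good k
    · simp [hg] at hk
    · simp only [if_neg hg] at hk
      obtain ⟨m, hm⟩ := hk
      exact hz k hg m hm
  obtain ⟨ε₁, hε₁, hball₁⟩ := Metric.isOpen_iff.1 hZclosed.isOpen_compl z hzZ
  -- uniform Lipschitz constant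
  obtain ⟨B, hB⟩ : ∃ B : ℝ, ∀ k : Fin n, |(h k 1 : ℝ)| + |(h k 0 : ℝ)| ≤ B := by
    rcases isEmpty_or_nonempty (Fin n) with hn | hn
    · exact ⟨0, fun k => (hn.false k).elim⟩
    · exact Finite.exists_le _
  set B' : ℝ := max B 0 + 1 with hB'
  have hB'pos : 0 < B' := by positivity
  have hB'ge : ∀ k : Fin n, |(h k 1 : ℝ)| + |(h k 0 : ℝ)| ≤ B' := fun k =>
    le_trans (hB k) (by rw [hB']; nlinarith [le_max_left B (0:ℝ)])
  set ε₂ : ℝ := 1 / (4 * B') with hε₂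
  have hε₂pos : 0 < ε₂ := by positivity
  refine ⟨min ε₁ ε₂, lt_min hε₁ hε₂pos, ?_, ?_⟩
  · intro x hx k hk m hm
    have hxZ : x ∈ Zᶜ := hball₁ (Metric.mem_ball.2 (lt_of_lt_of_le hx (min_le_left _ _)))
    apply hxZ
    rw [hZ]
    refine mem_iUnion.2 ⟨k, ?_⟩
    simp only [if_neg hk]
    exact ⟨m, hm⟩
  · intro x hx k
    have hd : dist x z < ε₂ := lt_of_lt_of_le hx (min_le_right _ _)
    have hlip : |ee (h k) (x - p k) - ee (h k) (z - p k)|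
        ≤ (|(h k 1 : ℝ)| + |(h k 0 : ℝ)|) * ‖(x - p k) - (z - p k)‖ := ee_lip _ _ _
    have hnorm : ‖(x - p k) - (z - p k)‖ = dist x z := by
      rw [dist_eq_norm]
      congr 1
      abel
    rw [hnorm] at hlip
    have hMnonneg : (0:ℝ) ≤ |(h k 1 : ℝ)| + |(h k 0 : ℝ)| :=
      add_nonneg (abs_nonneg _) (abs_nonneg _)
    calc |ee (h k) (x - p k) - ee (h k) (z - p k)|
        ≤ (|(h k 1 : ℝ)| + |(h k 0 : ℝ)|) * dist x z := hlip
      _ ≤ B' * ε₂ := by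
          apply mul_le_mul (hB'ge k) (le_of_lt hd) dist_nonneg (le_of_lt hB'pos)
      _ = B' * (1 / (4 * B')) := by rw [hε₂]
      _ < 1/2 := by
          rw [mul_one_div]
          rw [div_lt_iff₀ (by positivity)]
          nlinarith
  
/-- the side (signature) of a component relative to a line through a closure point -/
lemma component_signature {x₀ : V2} (hx₀ : x₀ ∈ Ut h p) {z : V2}
    (hz : z ∈ closure (connectedComponentIn (Ut h p) x₀)) {i : Fin n} {mi : ℤ}
    (hzi : ee (h i) (z - p i) = (mi:ℝ)) :
    ∃ s : ℝ, (s = 1 ∨ s = -1) ∧ ∀ x ∈ connectedComponentIn (Ut h p) x₀,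
      0 < s * (ee (h i) (x - p i) - (mi:ℝ)) ∧ s * (ee (h i) (x - p i) - (mi:ℝ)) < 1 := by
  set C := connectedComponentIn (Ut h p) x₀ with hC
  have hCpre : IsPreconnected C := isPreconnected_connectedComponentIn
  have hCU : C ⊆ Ut h p := connectedComponentIn_subset _ _
  have hx₀C : x₀ ∈ C := mem_connectedComponentIn hx₀
  have hint := ee_interval hCpre hCU hx₀C i
  set K : ℤ := ⌊ee (h i) (x₀ - p i)⌋ with hK
  -- the closure is inside the closed strip
  have hcl : closure C ⊆ (fun x => ee (h i) (x - p i)) ⁻¹' (Icc (K:ℝ) ((K:ℝ)+1)) := by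
    apply closure_minimal
    · intro x hx
      simp only [mem_preimage, mem_Icc]
      exact ⟨le_of_lt (hint x hx).1, le_of_lt (hint x hx).2⟩
    · exact IsClosed.preimage ((continuous_ee (h i)).comp (continuous_id.sub continuous_const))
        isClosed_Icc
  have hzK := hcl hz
  simp only [mem_preimage, mem_Icc] at hzK
  rw [hzi] at hzK
  have hKmi : K = mi ∨ K + 1 = mi := by
    have h1 : (K:ℝ) ≤ (mi:ℝ) := hzK.1
    have h2 : (mi:ℝ) ≤ (K:ℝ) + 1 := hzK.2
    have h1' : K ≤ mi := by exact_mod_cast h1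
    have h2' : (mi:ℝ) ≤ ((K+1 : ℤ):ℝ) := by push_cast; linarith
    have h2'' : mi ≤ K + 1 := by exact_mod_cast h2'
    omega
  rcases hKmi with hc | hc
  · refine ⟨1, Or.inl rfl, fun x hx => ?_⟩
    have := hint x hx
    rw [hc] at this
    constructor <;> [linarith [this.1]; linarith [this.2]]
  · refine ⟨-1, Or.inr rfl, fun x hx => ?_⟩
    have := hint x hx
    have e1 : ((K:ℝ)) = (mi:ℝ) - 1 := by
      have h3 : ((K + 1 : ℤ):ℝ) = ((mi:ℤ):ℝ) := by rw [hc]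
      push_cast at h3
      linarith
    rw [e1] at this
    constructor <;> [linarith [this.2]; linarith [this.1]]

end Arrangement
end S3
namespace S3
open Set

lemma pm_eq_of_mul_pos {a b : ℝ} (ha : a = 1 ∨ a = -1) (hb : b = 1 ∨ b = -1)
    (hab : 0 < a * b) : a = b := by
  rcases ha with rfl | rfl <;> rcases hb with rfl | rfl <;> linarith

lemma sign_eq' {a b c : ℝ} (ha : a = 1 ∨ a = -1) (hb : b = 1 ∨ b = -1)
    (h1 : 0 < a * c) (h2 : 0 < b * c) : a = b := by
  rcases ha with rfl | rfl <;> rcases hb with rfl | rfl <;> [rfl; skip; skip; rfl] <;>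
    simp only [one_mul, neg_one_mul] at h1 h2 <;> linarith

section Arrangement

variable {n : ℕ} {h : Fin n → Fin 2 → ℤ} {p : Fin n → Fin 2 → ℝ}
variable {L : Fin n → Set Torus2}

/-- the local sector at a closure point lies inside the component -/
lemma sector_sub_component {y z : V2} {i j : Fin n} {mi mj : ℤ} {si sj ε : ℝ}
    (hε : 0 < ε)
    (hUtball : ∀ x, dist x z < ε → ee (h i) (x - p i) ≠ (mi:ℝ) →
      ee (h j) (x - p j) ≠ (mj:ℝ) → x ∈ Ut h p)
    (hzcl : z ∈ closure (connectedComponentIn (Ut h p) y))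
    (hsig_i : ∀ x ∈ connectedComponentIn (Ut h p) y, 0 < si * (ee (h i) (x - p i) - (mi:ℝ)))
    (hsig_j : ∀ x ∈ connectedComponentIn (Ut h p) y, 0 < sj * (ee (h j) (x - p j) - (mj:ℝ))) :
    ∀ x, dist x z < ε → 0 < si * (ee (h i) (x - p i) - (mi:ℝ)) →
      0 < sj * (ee (h j) (x - p j) - (mj:ℝ)) → x ∈ connectedComponentIn (Ut h p) y := by
  set Sec : Set V2 := Metric.ball z ε ∩ ({x | 0 < si * (ee (h i) (x - p i) - (mi:ℝ))} ∩
    {x | 0 < sj * (ee (h j) (x - p j) - (mj:ℝ))}) with hSecdef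
  have hconv : Convex ℝ Sec :=
    (convex_ball z ε).inter ((convex_side (h i) (p i) si (mi:ℝ)).inter
      (convex_side (h j) (p j) sj (mj:ℝ)))
  have hSecUt : Sec ⊆ Ut h p := by
    rintro q ⟨hq1, hq2, hq3⟩
    refine hUtball q (Metric.mem_ball.1 hq1) ?_ ?_
    · intro heq
      rw [mem_setOf_eq, heq, sub_self, mul_zero] at hq2
      exact lt_irrefl _ hq2
    · intro heq
      rw [mem_setOf_eq, heq, sub_self, mul_zero] at hq3
      exact lt_irrefl _ hq3
  obtain ⟨w, hwC, hwd⟩ := Metric.mem_closure_iff.1 hzcl ε hε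
  have hwSec : w ∈ Sec := by
    refine ⟨Metric.mem_ball.2 (by rwa [dist_comm] at hwd), hsig_i w hwC, hsig_j w hwC⟩
  have hSecsub : Sec ⊆ connectedComponentIn (Ut h p) w :=
    hconv.isPreconnected.subset_connectedComponentIn hwSec hSecUt
  have hcompeq : connectedComponentIn (Ut h p) y = connectedComponentIn (Ut h p) w :=
    connectedComponentIn_eq hwC
  intro x hd h1 h2
  rw [hcompeq]
  exact hSecsub ⟨Metric.mem_ball.2 hd, h1, h2⟩

/-- the ascent lemma: from a local minimum only ascending directions enter the sector -/
lemma ascend {y z : V2} {i j : Fin n} {mi mj : ℤ} {si sj ε : ℝ} (hε : 0 < ε)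
    (hSec : ∀ x, dist x z < ε → 0 < si * (ee (h i) (x - p i) - (mi:ℝ)) →
      0 < sj * (ee (h j) (x - p j) - (mj:ℝ)) → x ∈ connectedComponentIn (Ut h p) y)
    (hmin : IsMinOn lin (closure (connectedComponentIn (Ut h p) y)) z)
    (hzi : ee (h i) (z - p i) = (mi:ℝ)) (hzj : ee (h j) (z - p j) = (mj:ℝ))
    {Wa Wb : V2}
    (haI : 0 < si * ee (h i) Wa) (haJ : 0 < sj * ee (h j) Wa)
    (hbI : 0 ≤ si * ee (h i) Wb) (hbJ : 0 ≤ sj * ee (h j) Wb) :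
    0 ≤ lin Wb := by
  by_contra hcon
  push_neg at hcon
  obtain ⟨A, hA⟩ : ∃ A : ℝ, A = |lin Wa| := ⟨_, rfl⟩
  obtain ⟨Bq, hBq⟩ : ∃ B : ℝ, B = -lin Wb := ⟨_, rfl⟩
  have hBqpos : 0 < Bq := by rw [hBq]; linarith
  obtain ⟨R, hR⟩ : ∃ R : ℝ, R = ‖Wa‖ + ‖Wb‖ + 1 := ⟨_, rfl⟩
  have hRpos : 0 < R := by
    have := norm_nonneg Wa; have := norm_nonneg Wb; rw [hR]; linarith
  obtain ⟨β, hβ⟩ : ∃ β : ℝ, β = ε / (2 * R) := ⟨_, rfl⟩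
  have hβpos : 0 < β := by rw [hβ]; positivity
  obtain ⟨α, hα⟩ : ∃ α : ℝ, α = min (β * Bq / (2 * (A + 1))) β := ⟨_, rfl⟩
  have hApos : 0 ≤ A := by rw [hA]; exact abs_nonneg _
  have hαpos : 0 < α := by
    rw [hα]; exact lt_min (by positivity) hβpos
  have hαβ : α ≤ β := by rw [hα]; exact min_le_right _ _
  have hαA : α * A ≤ β * Bq / 2 := by
    have h1 : α ≤ β * Bq / (2 * (A + 1)) := by rw [hα]; exact min_le_left _ _
    have h2 : α * (A + 1) ≤ β * Bq / (2 * (A + 1)) * (A + 1) := by nlinarith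
    have h3 : β * Bq / (2 * (A + 1)) * (A + 1) = β * Bq / 2 := by
      field_simp
    nlinarith
  obtain ⟨x', hx'⟩ : ∃ x' : V2, x' = z + α • Wa + β • Wb := ⟨_, rfl⟩
  have hdist : dist x' z < ε := by
    have hxz : x' - z = α • Wa + β • Wb := by rw [hx']; abel
    rw [dist_eq_norm, hxz]
    calc ‖α • Wa + β • Wb‖ ≤ ‖α • Wa‖ + ‖β • Wb‖ := norm_add_le _ _
      _ = α * ‖Wa‖ + β * ‖Wb‖ := by
          rw [norm_smul, norm_smul, Real.norm_eq_abs, Real.norm_eq_abs,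
            abs_of_pos hαpos, abs_of_pos hβpos]
      _ ≤ β * ‖Wa‖ + β * ‖Wb‖ := by nlinarith [norm_nonneg Wa]
      _ = β * (R - 1) := by rw [hR]; ring
      _ < β * R := by nlinarith
      _ = ε / 2 := by rw [hβ]; field_simp
      _ < ε := by linarith
  have hvi : ee (h i) (x' - p i) = (mi:ℝ) + α * ee (h i) Wa + β * ee (h i) Wb := by
    have hsplit : x' - p i = ((z - p i) + α • Wa) + β • Wb := by rw [hx']; abel
    rw [hsplit, ee_add, ee_add, ee_smul, ee_smul, hzi]
  have hvj : ee (h j) (x' - p j) = (mj:ℝ) + α * ee (h j) Wa + β * ee (h j) Wb := by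
    have hsplit : x' - p j = ((z - p j) + α • Wa) + β • Wb := by rw [hx']; abel
    rw [hsplit, ee_add, ee_add, ee_smul, ee_smul, hzj]
  have hlin : lin x' = lin z + α * lin Wa + β * lin Wb := by
    rw [hx', lin_add, lin_add, lin_smul, lin_smul]
  have hc1 : 0 < si * (ee (h i) (x' - p i) - (mi:ℝ)) := by
    rw [hvi]
    have e1 : si * ((mi:ℝ) + α * ee (h i) Wa + β * ee (h i) Wb - mi)
        = α * (si * ee (h i) Wa) + β * (si * ee (h i) Wb) := by ring
    rw [e1]
    have := mul_pos hαpos haI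
    have := mul_nonneg (le_of_lt hβpos) hbI
    linarith
  have hc2 : 0 < sj * (ee (h j) (x' - p j) - (mj:ℝ)) := by
    rw [hvj]
    have e1 : sj * ((mj:ℝ) + α * ee (h j) Wa + β * ee (h j) Wb - mj)
        = α * (sj * ee (h j) Wa) + β * (sj * ee (h j) Wb) := by ring
    rw [e1]
    have := mul_pos hαpos haJ
    have := mul_nonneg (le_of_lt hβpos) hbJ
    linarith
  have hx'C : x' ∈ connectedComponentIn (Ut h p) y := hSec x' hdist hc1 hc2
  have hlt : lin x' < lin z := by
    rw [hlin]
    have h1 : α * lin Wa ≤ α * A := by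
      have hle : lin Wa ≤ A := by rw [hA]; exact le_abs_self _
      nlinarith
    have h2 : β * lin Wb = -(β * Bq) := by rw [hBq]; ring
    nlinarith
  have := isMinOn_iff.1 hmin x' (subset_closure hx'C)
  linarith

/-- no third line passes through a double point -/
lemma third_excluded (hL : ∀ i, L i = torusGeodesic (p i) (h i))
    (hprim : ∀ i, Int.gcd (h i 0) (h i 1) = 1)
    (hthree : ∀ x : Torus2, {i : Fin n | x ∈ L i}.ncard ≤ 2)
    {z : V2} {i j : Fin n} {mi mj : ℤ} (hij : i ≠ j)
    (hzi : ee (h i) (z - p i) = (mi:ℝ)) (hzj : ee (h j) (z - p j) = (mj:ℝ)) :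
    ∀ k, k ≠ i → k ≠ j → ∀ m : ℤ, ee (h k) (z - p k) ≠ (m:ℝ) := by
  intro k hki hkj m hm
  set S : Set (Fin n) := {k' | torusMk z ∈ L k'} with hS
  have hiS : i ∈ S := (mem_L_iff h p hL hprim i z).2 ⟨mi, hzi⟩
  have hjS : j ∈ S := (mem_L_iff h p hL hprim j z).2 ⟨mj, hzj⟩
  have hkS : k ∈ S := (mem_L_iff h p hL hprim k z).2 ⟨m, hm⟩
  have hsub : ({i, j, k} : Set (Fin n)) ⊆ S := by
    intro a ha
    rcases ha with rfl | rfl | rfl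
    exacts [hiS, hjS, hkS]
  have h3 : ({i, j, k} : Set (Fin n)).ncard = 3 := by
    have hik : i ≠ k := fun hc => hki hc.symm
    have hjk : j ≠ k := fun hc => hkj hc.symm
    rw [Set.ncard_insert_of_notMem (by simp [hij, hik]),
      Set.ncard_insert_of_notMem (by simp [hjk]), Set.ncard_singleton]
  have hle : ({i, j, k} : Set (Fin n)).ncard ≤ S.ncard :=
    Set.ncard_le_ncard hsub (Set.toFinite S)
  have := hthree (torusMk z)
  rw [hS] at hle
  omega

end Arrangement
end S3
namespace S3
open Set

lemma pm_mul {a b : ℝ} (ha : a = 1 ∨ a = -1) (hb : b = 1 ∨ b = -1) :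
    a * b = 1 ∨ a * b = -1 := by
  rcases ha with rfl | rfl <;> rcases hb with rfl | rfl <;> norm_num

lemma pm_ne_zero {a : ℝ} (ha : a = 1 ∨ a = -1) : a ≠ 0 := by
  rcases ha with rfl | rfl <;> norm_num

lemma pm_sq {a : ℝ} (ha : a = 1 ∨ a = -1) : a * a = 1 := by
  rcases ha with rfl | rfl <;> norm_num

lemma convex_pos_comb {a b x y : ℝ} (ha : 0 ≤ a) (hb : 0 ≤ b) (hab : a + b = 1)
    (hx : 0 < x) (hy : 0 < y) : 0 < a * x + b * y := by
  rcases eq_or_lt_of_le ha with ha0 | ha0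
  · have : b = 1 := by linarith
    rw [← ha0, this]; simpa using hy
  · have h1 : 0 < a * x := mul_pos ha0 hx
    have h2 : 0 ≤ b * y := mul_nonneg hb (le_of_lt hy)
    linarith

lemma comb_identity (z W1 W2 : V2) {a b α α' β β' : ℝ} (hab : a + b = 1) :
    a • (z + α • W1 + β • W2) + b • (z + α' • W1 + β' • W2)
      = z + (a * α + b * α') • W1 + (a * β + b * β') • W2 := by
  have hz : a • z + b • z = z := by rw [← add_smul, hab, one_smul]
  calc a • (z + α • W1 + β • W2) + b • (z + α' • W1 + β' • W2)
      = (a • z + b • z) + (a * α + b * α') • W1 + (a * β + b * β') • W2 := by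
        rw [smul_add, smul_add, smul_add, smul_add, smul_smul, smul_smul, smul_smul, smul_smul,
          add_smul, add_smul]
        abel
    _ = z + (a * α + b * α') • W1 + (a * β + b * β') • W2 := by rw [hz]

section Arrangement

variable {n : ℕ} {h : Fin n → Fin 2 → ℤ} {p : Fin n → Fin 2 → ℝ}
variable {L : Fin n → Set Torus2}

/-- the minimum point of the closure of a component lies on two distinct lines -/
lemma min_is_vertex (hL : ∀ i, L i = torusGeodesic (p i) (h i))
    (hprim : ∀ i, Int.gcd (h i 0) (h i 1) = 1)
    (hthree : ∀ x : Torus2, {i : Fin n | x ∈ L i}.ncard ≤ 2)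
    {x₀ : V2} (hx₀ : x₀ ∈ Ut h p) {z : V2}
    (hzcl : z ∈ closure (connectedComponentIn (Ut h p) x₀))
    (hmin : IsMinOn lin (closure (connectedComponentIn (Ut h p) x₀)) z) :
    ∃ i j : Fin n, ∃ mi mj : ℤ, i ≠ j ∧
      ee (h i) (z - p i) = (mi:ℝ) ∧ ee (h j) (z - p j) = (mj:ℝ) := by
  classical
  -- step 1 : z is on some line
  have hzUt : z ∉ Ut h p := by
    intro hzU
    have hopen : IsOpen (connectedComponentIn (Ut h p) z) :=
      (isOpen_Ut h p).connectedComponentIn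
    obtain ⟨r, hr, hball⟩ := Metric.isOpen_iff.1 hopen z (mem_connectedComponentIn hzU)
    obtain ⟨w, hwC, hwd⟩ := Metric.mem_closure_iff.1 hzcl r hr
    have hwz : w ∈ connectedComponentIn (Ut h p) z :=
      hball (Metric.mem_ball.2 (by rwa [dist_comm] at hwd))
    have he1 : connectedComponentIn (Ut h p) z = connectedComponentIn (Ut h p) w :=
      connectedComponentIn_eq hwz
    have he2 : connectedComponentIn (Ut h p) x₀ = connectedComponentIn (Ut h p) w :=
      connectedComponentIn_eq hwC
    have hzC : z ∈ connectedComponentIn (Ut h p) x₀ := by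
      rw [he2, ← he1]; exact mem_connectedComponentIn hzU
    have hopenC : IsOpen (connectedComponentIn (Ut h p) x₀) :=
      (isOpen_Ut h p).connectedComponentIn
    obtain ⟨r', hr', hball'⟩ := Metric.isOpen_iff.1 hopenC z hzC
    obtain ⟨e₀, he₀⟩ : ∃ e₀ : V2, e₀ = rv ![1, 0] := ⟨_, rfl⟩
    have hline₀ : lin e₀ = 1 := by
      rw [he₀]; simp [lin, rv]
    have hnorm₀ : ‖e₀‖ ≤ 1 := by
      refine (pi_norm_le_iff_of_nonneg zero_le_one).2 fun k => ?_
      fin_cases k <;> rw [he₀] <;> simp [rv]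
    obtain ⟨y', hy'⟩ : ∃ y' : V2, y' = z + (-(r'/2)) • e₀ := ⟨_, rfl⟩
    have hy'C : y' ∈ connectedComponentIn (Ut h p) x₀ := by
      apply hball'
      rw [Metric.mem_ball, dist_eq_norm, hy']
      have : z + (-(r'/2)) • e₀ - z = (-(r'/2)) • e₀ := by abel
      rw [this, norm_smul, Real.norm_eq_abs]
      have : |(-(r'/2))| = r'/2 := by rw [abs_neg, abs_of_pos (by linarith)]
      rw [this]
      nlinarith [norm_nonneg e₀]
    have hy'lin : lin y' < lin z := by
      rw [hy', lin_add, lin_smul, hline₀]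
      linarith
    have := isMinOn_iff.1 hmin y' (subset_closure hy'C)
    linarith
  -- step 2 : ∃ a line through z
  have hex : ∃ i : Fin n, ∃ m : ℤ, ee (h i) (z - p i) = (m:ℝ) := by
    by_contra hc
    push_neg at hc
    exact hzUt fun i m => hc i m
  obtain ⟨i, mi, hzi⟩ := hex
  -- step 3 : ∃ a second line
  by_cases hsecond : ∃ j, j ≠ i ∧ ∃ mj : ℤ, ee (h j) (z - p j) = (mj:ℝ)
  · obtain ⟨j, hji, mj, hzj⟩ := hsecond
    exact ⟨i, j, mi, mj, fun hc => hji hc.symm, hzi, hzj⟩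
  exfalso
  push_neg at hsecond
  obtain ⟨ε, hε, hb1, hb2⟩ := ball_structure (h := h) (p := p) (fun k => k = i)
    (fun k hk m => hsecond k hk m)
  have havoid : ∀ x, dist x z < ε → ee (h i) (x - p i) ≠ (mi:ℝ) → x ∈ Ut h p := by
    intro x hd hne k m hm
    by_cases hk : k = i
    · subst hk
      have hw := hb2 x hd k
      rw [hzi] at hw
      have hmmi : m = mi := by
        apply int_eq_of_close
        rw [hm] at hw
        linarith [abs_nonneg ((m:ℝ) - mi), hw]
      rw [hmmi] at hm
      exact hne hm
    · exact hb1 x hd k hk m hm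
  obtain ⟨si, hsipm, hsig⟩ := component_signature hx₀ hzcl hzi
  have hSec := sector_sub_component (j := i) (sj := si) (mj := mi) hε
    (fun x hd h1 _ => havoid x hd h1) hzcl
    (fun x hx => (hsig x hx).1) (fun x hx => (hsig x hx).1)
  -- descend along the line
  obtain ⟨wa, hwa⟩ : ∃ wa : V2,
      wa = (if 0 < lin (rv (h i)) then (-1:ℝ) else 1) • rv (h i) := ⟨_, rfl⟩
  have hci : lin (rv (h i)) ≠ 0 := lin_rv_ne (hprim i)
  have hlinwa : lin wa < 0 := by
    rw [hwa, lin_smul]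
    split_ifs with hc
    · nlinarith
    · rcases lt_or_gt_of_ne hci with hlt | hgt
      · nlinarith
      · exact absurd hgt hc
  have heewa : ee (h i) wa = 0 := by
    rw [hwa, ee_smul, ee_rv_self, mul_zero]
  obtain ⟨nuz, hnuz⟩ : ∃ nuz : Fin 2 → ℤ, nuz = ![h i 1, -(h i 0)] := ⟨_, rfl⟩
  have heenu : ee (h i) (rv nuz) = ((h i 1 : ℝ))^2 + ((h i 0 : ℝ))^2 := by
    have h0 : nuz 0 = h i 1 := by rw [hnuz]; rfl
    have h1 : nuz 1 = -(h i 0) := by rw [hnuz]; rfl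
    simp only [ee, rv, h0, h1]
    push_cast
    ring
  have hQpos : 0 < ((h i 1 : ℝ))^2 + ((h i 0 : ℝ))^2 := by
    rcases prim_ne_zero (hprim i) with h0 | h0
    · have : ((h i 0 : ℝ)) ≠ 0 := by exact_mod_cast h0
      nlinarith [pow_two_pos_of_ne_zero this, sq_nonneg ((h i 1 : ℝ))]
    · have : ((h i 1 : ℝ)) ≠ 0 := by exact_mod_cast h0
      nlinarith [pow_two_pos_of_ne_zero this, sq_nonneg ((h i 0 : ℝ))]
  obtain ⟨wb, hwb⟩ : ∃ wb : V2, wb = si • rv nuz := ⟨_, rfl⟩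
  have hwbI : 0 < si * ee (h i) wb := by
    rw [hwb, ee_smul, ← mul_assoc, pm_sq hsipm, one_mul, heenu]
    exact hQpos
  have h0wa : 0 ≤ si * ee (h i) wa := by rw [heewa, mul_zero]
  have := ascend (j := i) (sj := si) (mj := mi) hε hSec hmin hzi hzi hwbI hwbI h0wa h0wa
  linarith

/-- two lines through a common point are non-parallel -/
lemma vertex_det (hL : ∀ i, L i = torusGeodesic (p i) (h i))
    (hprim : ∀ i, Int.gcd (h i 0) (h i 1) = 1)
    (hpar : ∀ i j, i ≠ j → (h i = h j ∨ h i = -h j) → Disjoint (L i) (L j))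
    {z : V2} {i j : Fin n} {mi mj : ℤ} (hij : i ≠ j)
    (hzi : ee (h i) (z - p i) = (mi:ℝ)) (hzj : ee (h j) (z - p j) = (mj:ℝ)) :
    h i 0 * h j 1 - h i 1 * h j 0 ≠ 0 := by
  intro hd0
  have hLi : torusMk z ∈ L i := (mem_L_iff h p hL hprim i z).2 ⟨mi, hzi⟩
  have hLj : torusMk z ∈ L j := (mem_L_iff h p hL hprim j z).2 ⟨mj, hzj⟩
  have hpp := prim_parallel (hprim i) (hprim j) hd0
  exact Set.disjoint_left.1 (hpar i j hij hpp) hLi hLj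

end Arrangement
end S3
namespace S3
open Set

section Arrangement

variable {n : ℕ} {h : Fin n → Fin 2 → ℤ} {p : Fin n → Fin 2 → ℝ}
variable {L : Fin n → Set Torus2}

set_option maxHeartbeats 1000000 in
/-- the canonical component attached to a vertex lift: existence, minimality,
uniqueness of the minimiser and uniqueness of the component -/
lemma vertex_core (hL : ∀ i, L i = torusGeodesic (p i) (h i))
    (hprim : ∀ i, Int.gcd (h i 0) (h i 1) = 1)
    (hthree : ∀ x : Torus2, {i : Fin n | x ∈ L i}.ncard ≤ 2)
    (hpar : ∀ i j, i ≠ j → (h i = h j ∨ h i = -h j) → Disjoint (L i) (L j))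
    {z : V2} {i j : Fin n} {mi mj : ℤ}
    (hij : i ≠ j) (hzi : ee (h i) (z - p i) = (mi:ℝ)) (hzj : ee (h j) (z - p j) = (mj:ℝ)) :
    ∃ x₁, x₁ ∈ Ut h p ∧
      z ∈ closure (connectedComponentIn (Ut h p) x₁) ∧
      IsMinOn lin (closure (connectedComponentIn (Ut h p) x₁)) z ∧
      (∀ x ∈ closure (connectedComponentIn (Ut h p) x₁), lin x = lin z → x = z) ∧
      (∀ y, y ∈ Ut h p → z ∈ closure (connectedComponentIn (Ut h p) y) →
        IsMinOn lin (closure (connectedComponentIn (Ut h p) y)) z →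
        connectedComponentIn (Ut h p) y = connectedComponentIn (Ut h p) x₁) := by
  classical
  have hdet := vertex_det hL hprim hpar hij hzi hzj
  obtain ⟨ε, hε, hb1, hb2⟩ := ball_structure (h := h) (p := p) (fun k => k = i ∨ k = j)
    (fun k hk m => third_excluded hL hprim hthree hij hzi hzj k
      (fun hc => hk (Or.inl hc)) (fun hc => hk (Or.inr hc)) m)
  have havoid : ∀ x, dist x z < ε → ee (h i) (x - p i) ≠ (mi:ℝ) →
      ee (h j) (x - p j) ≠ (mj:ℝ) → x ∈ Ut h p := by
    intro x hd h1 h2 k m hm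
    by_cases hki : k = i
    · subst hki
      have hw := hb2 x hd k
      rw [hzi] at hw
      have hmeq : m = mi := int_eq_of_close (by rw [hm] at hw; linarith)
      exact h1 (hmeq ▸ hm)
    · by_cases hkj : k = j
      · subst hkj
        have hw := hb2 x hd k
        rw [hzj] at hw
        have hmeq : m = mj := int_eq_of_close (by rw [hm] at hw; linarith)
        exact h2 (hmeq ▸ hm)
      · exact hb1 x hd k (not_or.2 ⟨hki, hkj⟩) m hm
  have hD1ne : ee (h i) (rv (h j)) ≠ 0 := by
    have hcomp : ee (h i) (rv (h j)) = ((h i 1 * h j 0 - h i 0 * h j 1 : ℤ) : ℝ) := by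
      simp only [ee, rv]; push_cast; ring
    rw [hcomp, Ne, Int.cast_eq_zero]
    intro hc
    exact hdet (by linarith)
  have hD2ne : ee (h j) (rv (h i)) ≠ 0 := by
    have hcomp : ee (h j) (rv (h i)) = ((h j 1 * h i 0 - h j 0 * h i 1 : ℤ) : ℝ) := by
      simp only [ee, rv]; push_cast; ring
    rw [hcomp, Ne, Int.cast_eq_zero]
    intro hc
    exact hdet (by linarith)
  have hcj : lin (rv (h j)) ≠ 0 := lin_rv_ne (hprim j)
  have hci : lin (rv (h i)) ≠ 0 := lin_rv_ne (hprim i)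
  obtain ⟨σ1, hσ1⟩ : ∃ σ : ℝ, σ = if 0 < lin (rv (h j)) then (1:ℝ) else -1 := ⟨_, rfl⟩
  obtain ⟨σ2, hσ2⟩ : ∃ σ : ℝ, σ = if 0 < lin (rv (h i)) then (1:ℝ) else -1 := ⟨_, rfl⟩
  have hσ1pm : σ1 = 1 ∨ σ1 = -1 := by rw [hσ1]; split_ifs <;> simp
  have hσ2pm : σ2 = 1 ∨ σ2 = -1 := by rw [hσ2]; split_ifs <;> simp
  obtain ⟨W1, hW1⟩ : ∃ W : V2, W = σ1 • rv (h j) := ⟨_, rfl⟩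
  obtain ⟨W2, hW2⟩ : ∃ W : V2, W = σ2 • rv (h i) := ⟨_, rfl⟩
  have hlinW1 : 0 < lin W1 := by
    rw [hW1, lin_smul, hσ1]
    split_ifs with hc
    · simpa using hc
    · rcases lt_or_gt_of_ne hcj with hlt | hgt
      · nlinarith
      · exact absurd hgt hc
  have hlinW2 : 0 < lin W2 := by
    rw [hW2, lin_smul, hσ2]
    split_ifs with hc
    · simpa using hc
    · rcases lt_or_gt_of_ne hci with hlt | hgt
      · nlinarith
      · exact absurd hgt hc
  have heeW1i : ee (h i) W1 = σ1 * ee (h i) (rv (h j)) := by rw [hW1, ee_smul]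
  have heeW1ine : ee (h i) W1 ≠ 0 := by
    rw [heeW1i]; exact mul_ne_zero (pm_ne_zero hσ1pm) hD1ne
  have heeW1j : ee (h j) W1 = 0 := by rw [hW1, ee_smul, ee_rv_self, mul_zero]
  have heeW2j : ee (h j) W2 = σ2 * ee (h j) (rv (h i)) := by rw [hW2, ee_smul]
  have heeW2jne : ee (h j) W2 ≠ 0 := by
    rw [heeW2j]; exact mul_ne_zero (pm_ne_zero hσ2pm) hD2ne
  have heeW2i : ee (h i) W2 = 0 := by rw [hW2, ee_smul, ee_rv_self, mul_zero]
  obtain ⟨R, hR⟩ : ∃ R : ℝ, R = ‖W1‖ + ‖W2‖ + 1 := ⟨_, rfl⟩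
  have hRpos : 0 < R := by
    have := norm_nonneg W1; have := norm_nonneg W2; rw [hR]; linarith
  have hR1 : ‖W1‖ + ‖W2‖ ≤ R - 1 := by rw [hR]; linarith
  obtain ⟨t₁, ht₁⟩ : ∃ t : ℝ, t = ε / (2 * R) := ⟨_, rfl⟩
  have ht₁pos : 0 < t₁ := by rw [ht₁]; positivity
  have hdistpt : ∀ α β : ℝ, 0 ≤ α → 0 ≤ β →
      dist (z + α • W1 + β • W2) z ≤ α * ‖W1‖ + β * ‖W2‖ := by
    intro α β hα hβ
    rw [dist_eq_norm]
    have hxz : z + α • W1 + β • W2 - z = α • W1 + β • W2 := by abel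
    rw [hxz]
    calc ‖α • W1 + β • W2‖ ≤ ‖α • W1‖ + ‖β • W2‖ := norm_add_le _ _
      _ = α * ‖W1‖ + β * ‖W2‖ := by
          rw [norm_smul, norm_smul, Real.norm_eq_abs, Real.norm_eq_abs,
            abs_of_nonneg hα, abs_of_nonneg hβ]
  have hdistsmall : ∀ α β : ℝ, 0 ≤ α → α ≤ t₁ → 0 ≤ β → β ≤ t₁ →
      dist (z + α • W1 + β • W2) z < ε := by
    intro α β hα hαt hβ hβt
    calc dist (z + α • W1 + β • W2) z ≤ α * ‖W1‖ + β * ‖W2‖ := hdistpt α β hα hβ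
      _ ≤ t₁ * ‖W1‖ + t₁ * ‖W2‖ := by nlinarith [norm_nonneg W1, norm_nonneg W2]
      _ = t₁ * (‖W1‖ + ‖W2‖) := by ring
      _ ≤ t₁ * (R - 1) := by nlinarith
      _ < t₁ * R := by nlinarith
      _ = ε / 2 := by rw [ht₁]; field_simp
      _ < ε := by linarith
  have hvals_i : ∀ α β : ℝ,
      ee (h i) ((z + α • W1 + β • W2) - p i) = (mi:ℝ) + α * ee (h i) W1 := by
    intro α β
    have hsplit : (z + α • W1 + β • W2) - p i = ((z - p i) + α • W1) + β • W2 := by abel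
    rw [hsplit, ee_add, ee_add, ee_smul, ee_smul, hzi, heeW2i, mul_zero, add_zero]
  have hvals_j : ∀ α β : ℝ,
      ee (h j) ((z + α • W1 + β • W2) - p j) = (mj:ℝ) + β * ee (h j) W2 := by
    intro α β
    have hsplit : (z + α • W1 + β • W2) - p j = ((z - p j) + α • W1) + β • W2 := by abel
    rw [hsplit, ee_add, ee_add, ee_smul, ee_smul, hzj, heeW1j, mul_zero, add_zero]
  have hptUt : ∀ α β : ℝ, 0 < α → α ≤ t₁ → 0 < β → β ≤ t₁ →
      z + α • W1 + β • W2 ∈ Ut h p := by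
    intro α β hα hαt hβ hβt
    apply havoid _ (hdistsmall α β (le_of_lt hα) hαt (le_of_lt hβ) hβt)
    · rw [hvals_i α β]
      intro hc
      have hz0 : α * ee (h i) W1 = 0 := by linarith
      rcases mul_eq_zero.1 hz0 with hc1 | hc1
      · exact (ne_of_gt hα) hc1
      · exact heeW1ine hc1
    · rw [hvals_j α β]
      intro hc
      have hz0 : β * ee (h j) W2 = 0 := by linarith
      rcases mul_eq_zero.1 hz0 with hc1 | hc1
      · exact (ne_of_gt hβ) hc1
      · exact heeW2jne hc1
  obtain ⟨x₁, hx₁⟩ : ∃ x : V2, x = z + t₁ • W1 + t₁ • W2 := ⟨_, rfl⟩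
  have hx₁Ut : x₁ ∈ Ut h p := by
    rw [hx₁]; exact hptUt t₁ t₁ ht₁pos le_rfl ht₁pos le_rfl
  have hx₁dist : dist x₁ z < ε := by
    rw [hx₁]; exact hdistsmall t₁ t₁ (le_of_lt ht₁pos) le_rfl (le_of_lt ht₁pos) le_rfl
  have hTsub : ∀ α β : ℝ, 0 < α → α ≤ t₁ → 0 < β → β ≤ t₁ →
      z + α • W1 + β • W2 ∈ connectedComponentIn (Ut h p) x₁ := by
    intro α β hα hαt hβ hβt
    have hTconv : Convex ℝ {x : V2 | ∃ a b : ℝ, (0 < a ∧ a ≤ t₁) ∧ (0 < b ∧ b ≤ t₁) ∧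
        x = z + a • W1 + b • W2} := by
      rintro x ⟨a1, b1, ha1, hb1, hxe⟩ y ⟨a2, b2, ha2, hb2, hye⟩ s t hs ht hst
      refine ⟨s * a1 + t * a2, s * b1 + t * b2,
        ⟨convex_pos_comb hs ht hst ha1.1 ha2.1, ?_⟩,
        ⟨convex_pos_comb hs ht hst hb1.1 hb2.1, ?_⟩, ?_⟩
      · nlinarith [ha1.2, ha2.2]
      · nlinarith [hb1.2, hb2.2]
      · rw [hxe, hye]
        exact comb_identity z W1 W2 hst
    have hTUt : {x : V2 | ∃ a b : ℝ, (0 < a ∧ a ≤ t₁) ∧ (0 < b ∧ b ≤ t₁) ∧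
        x = z + a • W1 + b • W2} ⊆ Ut h p := by
      rintro x ⟨a1, b1, ha1, hb1, hxe⟩
      rw [hxe]
      exact hptUt a1 b1 ha1.1 ha1.2 hb1.1 hb1.2
    have hx₁T : x₁ ∈ {x : V2 | ∃ a b : ℝ, (0 < a ∧ a ≤ t₁) ∧ (0 < b ∧ b ≤ t₁) ∧
        x = z + a • W1 + b • W2} := ⟨t₁, t₁, ⟨ht₁pos, le_rfl⟩, ⟨ht₁pos, le_rfl⟩, hx₁⟩
    have hsub := hTconv.isPreconnected.subset_connectedComponentIn hx₁T hTUt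
    exact hsub ⟨α, β, ⟨hα, hαt⟩, ⟨hβ, hβt⟩, rfl⟩
  have hzcl : z ∈ closure (connectedComponentIn (Ut h p) x₁) := by
    rw [Metric.mem_closure_iff]
    intro δ hδ
    obtain ⟨α, hα⟩ : ∃ α : ℝ, α = min t₁ (δ / (2 * R)) := ⟨_, rfl⟩
    have hαpos : 0 < α := by rw [hα]; exact lt_min ht₁pos (by positivity)
    have hαt : α ≤ t₁ := by rw [hα]; exact min_le_left _ _
    have hαδ : α ≤ δ / (2 * R) := by rw [hα]; exact min_le_right _ _
    refine ⟨z + α • W1 + α • W2, hTsub α α hαpos hαt hαpos hαt, ?_⟩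
    rw [dist_comm]
    have h2R : 0 < 2 * R := by linarith
    calc dist (z + α • W1 + α • W2) z ≤ α * ‖W1‖ + α * ‖W2‖ :=
          hdistpt α α (le_of_lt hαpos) (le_of_lt hαpos)
      _ = α * (‖W1‖ + ‖W2‖) := by ring
      _ ≤ α * (R - 1) := by nlinarith
      _ < α * R := by nlinarith
      _ ≤ (δ / (2 * R)) * R := by nlinarith
      _ = δ / 2 := by field_simp
      _ < δ := by linarith
  obtain ⟨si, hsipm, hsig_i⟩ := component_signature hx₁Ut hzcl hzi
  obtain ⟨sj, hsjpm, hsig_j⟩ := component_signature hx₁Ut hzcl hzj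
  have hstar_i : 0 < si * ee (h i) W1 := by
    have hx₁C : x₁ ∈ connectedComponentIn (Ut h p) x₁ := mem_connectedComponentIn hx₁Ut
    have hs := (hsig_i x₁ hx₁C).1
    rw [hx₁, hvals_i t₁ t₁] at hs
    have h2 : si * ((mi:ℝ) + t₁ * ee (h i) W1 - mi) = t₁ * (si * ee (h i) W1) := by ring
    rw [h2] at hs
    nlinarith
  have hstar_j : 0 < sj * ee (h j) W2 := by
    have hx₁C : x₁ ∈ connectedComponentIn (Ut h p) x₁ := mem_connectedComponentIn hx₁Ut
    have hs := (hsig_j x₁ hx₁C).1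
    rw [hx₁, hvals_j t₁ t₁] at hs
    have h2 : sj * ((mj:ℝ) + t₁ * ee (h j) W2 - mj) = t₁ * (sj * ee (h j) W2) := by ring
    rw [h2] at hs
    nlinarith
  have hclosI : ∀ x ∈ closure (connectedComponentIn (Ut h p) x₁),
      0 ≤ si * (ee (h i) (x - p i) - (mi:ℝ)) := by
    intro x hx
    have hsub2 : closure (connectedComponentIn (Ut h p) x₁) ⊆
        (fun x => si * (ee (h i) (x - p i) - (mi:ℝ))) ⁻¹' (Ici 0) := by
      apply closure_minimal
      · intro w hw
        exact le_of_lt (hsig_i w hw).1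
      · exact IsClosed.preimage
          (continuous_const.mul (((continuous_ee (h i)).comp
            (continuous_id.sub continuous_const)).sub continuous_const)) isClosed_Ici
    exact hsub2 hx
  have hclosJ : ∀ x ∈ closure (connectedComponentIn (Ut h p) x₁),
      0 ≤ sj * (ee (h j) (x - p j) - (mj:ℝ)) := by
    intro x hx
    have hsub2 : closure (connectedComponentIn (Ut h p) x₁) ⊆
        (fun x => sj * (ee (h j) (x - p j) - (mj:ℝ))) ⁻¹' (Ici 0) := by
      apply closure_minimal
      · intro w hw
        exact le_of_lt (hsig_j w hw).1
      · exact IsClosed.preimage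
          (continuous_const.mul (((continuous_ee (h j)).comp
            (continuous_id.sub continuous_const)).sub continuous_const)) isClosed_Ici
    exact hsub2 hx
  have hdecomp : ∀ x : V2, x = z + ((ee (h i) (x - p i) - (mi:ℝ)) / ee (h i) W1) • W1
      + ((ee (h j) (x - p j) - (mj:ℝ)) / ee (h j) W2) • W2 := by
    intro x
    have hxz_i : ee (h i) (x - z) = ee (h i) (x - p i) - (mi:ℝ) := by
      have hs : x - z = (x - p i) - (z - p i) := by abel
      rw [hs, ee_sub, hzi]
    have hxz_j : ee (h j) (x - z) = ee (h j) (x - p j) - (mj:ℝ) := by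
      have hs : x - z = (x - p j) - (z - p j) := by abel
      rw [hs, ee_sub, hzj]
    have hri : ee (h i) (x - (z + ((ee (h i) (x - p i) - (mi:ℝ)) / ee (h i) W1) • W1
        + ((ee (h j) (x - p j) - (mj:ℝ)) / ee (h j) W2) • W2)) = 0 := by
      have hsplit : x - (z + ((ee (h i) (x - p i) - (mi:ℝ)) / ee (h i) W1) • W1
          + ((ee (h j) (x - p j) - (mj:ℝ)) / ee (h j) W2) • W2)
          = ((x - z) - ((ee (h i) (x - p i) - (mi:ℝ)) / ee (h i) W1) • W1)
            - ((ee (h j) (x - p j) - (mj:ℝ)) / ee (h j) W2) • W2 := by abel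
      rw [hsplit, ee_sub, ee_sub, ee_smul, ee_smul, hxz_i, heeW2i, mul_zero, sub_zero,
        div_mul_cancel₀ _ heeW1ine, sub_self]
    have hrj : ee (h j) (x - (z + ((ee (h i) (x - p i) - (mi:ℝ)) / ee (h i) W1) • W1
        + ((ee (h j) (x - p j) - (mj:ℝ)) / ee (h j) W2) • W2)) = 0 := by
      have hsplit : x - (z + ((ee (h i) (x - p i) - (mi:ℝ)) / ee (h i) W1) • W1
          + ((ee (h j) (x - p j) - (mj:ℝ)) / ee (h j) W2) • W2)
          = ((x - z) - ((ee (h i) (x - p i) - (mi:ℝ)) / ee (h i) W1) • W1)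
            - ((ee (h j) (x - p j) - (mj:ℝ)) / ee (h j) W2) • W2 := by abel
      rw [hsplit, ee_sub, ee_sub, ee_smul, ee_smul, hxz_j, heeW1j, mul_zero, sub_zero,
        div_mul_cancel₀ _ heeW2jne, sub_self]
    have hr0 := ee_pair_inj hdet hri hrj
    exact sub_eq_zero.1 hr0
  have hkey : ∀ x ∈ closure (connectedComponentIn (Ut h p) x₁),
      0 ≤ (ee (h i) (x - p i) - (mi:ℝ)) / ee (h i) W1 ∧
      0 ≤ (ee (h j) (x - p j) - (mj:ℝ)) / ee (h j) W2 ∧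
      lin x = lin z + ((ee (h i) (x - p i) - (mi:ℝ)) / ee (h i) W1) * lin W1
        + ((ee (h j) (x - p j) - (mj:ℝ)) / ee (h j) W2) * lin W2 := by
    intro x hx
    refine ⟨?_, ?_, ?_⟩
    · have htrick : (ee (h i) (x - p i) - (mi:ℝ)) / ee (h i) W1
          = (si * (ee (h i) (x - p i) - (mi:ℝ))) / (si * ee (h i) W1) :=
        (mul_div_mul_left _ _ (pm_ne_zero hsipm)).symm
      rw [htrick]
      exact div_nonneg (hclosI x hx) (le_of_lt hstar_i)
    · have htrick : (ee (h j) (x - p j) - (mj:ℝ)) / ee (h j) W2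
          = (sj * (ee (h j) (x - p j) - (mj:ℝ))) / (sj * ee (h j) W2) :=
        (mul_div_mul_left _ _ (pm_ne_zero hsjpm)).symm
      rw [htrick]
      exact div_nonneg (hclosJ x hx) (le_of_lt hstar_j)
    · conv_lhs => rw [hdecomp x]
      rw [lin_add, lin_add, lin_smul, lin_smul]
  have hminx : IsMinOn lin (closure (connectedComponentIn (Ut h p) x₁)) z := by
    rw [isMinOn_iff]
    intro x hx
    obtain ⟨hA, hB, hlx⟩ := hkey x hx
    rw [hlx]
    nlinarith [mul_nonneg hA (le_of_lt hlinW1), mul_nonneg hB (le_of_lt hlinW2)]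
  have huniq : ∀ x ∈ closure (connectedComponentIn (Ut h p) x₁), lin x = lin z → x = z := by
    intro x hx hlx0
    obtain ⟨hA, hB, hlx⟩ := hkey x hx
    have hsum : ((ee (h i) (x - p i) - (mi:ℝ)) / ee (h i) W1) * lin W1
        + ((ee (h j) (x - p j) - (mj:ℝ)) / ee (h j) W2) * lin W2 = 0 := by
      rw [hlx] at hlx0; linarith
    have h1 := mul_nonneg hA (le_of_lt hlinW1)
    have h2 := mul_nonneg hB (le_of_lt hlinW2)
    have hz1 : ((ee (h i) (x - p i) - (mi:ℝ)) / ee (h i) W1) * lin W1 = 0 := by linarith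
    have hz2 : ((ee (h j) (x - p j) - (mj:ℝ)) / ee (h j) W2) * lin W2 = 0 := by linarith
    have hA0 : (ee (h i) (x - p i) - (mi:ℝ)) / ee (h i) W1 = 0 :=
      (mul_eq_zero.1 hz1).resolve_right (ne_of_gt hlinW1)
    have hB0 : (ee (h j) (x - p j) - (mj:ℝ)) / ee (h j) W2 = 0 :=
      (mul_eq_zero.1 hz2).resolve_right (ne_of_gt hlinW2)
    have hdx := hdecomp x
    rw [hA0, hB0, zero_smul, zero_smul, add_zero, add_zero] at hdx
    exact hdx
  refine ⟨x₁, hx₁Ut, hzcl, hminx, huniq, ?_⟩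
  intro y hy hzcly hminy
  obtain ⟨si', hsi'pm, hsig_i'⟩ := component_signature hy hzcly hzi
  obtain ⟨sj', hsj'pm, hsig_j'⟩ := component_signature hy hzcly hzj
  have hSec' := sector_sub_component hε havoid hzcly (fun x hx => (hsig_i' x hx).1)
    (fun x hx => (hsig_j' x hx).1)
  obtain ⟨E1, hE1⟩ : ∃ E : ℝ, E = if 0 < ee (h i) (rv (h j)) then (1:ℝ) else -1 := ⟨_, rfl⟩
  obtain ⟨E2, hE2⟩ : ∃ E : ℝ, E = if 0 < ee (h j) (rv (h i)) then (1:ℝ) else -1 := ⟨_, rfl⟩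
  have hE1pm : E1 = 1 ∨ E1 = -1 := by rw [hE1]; split_ifs <;> simp
  have hE2pm : E2 = 1 ∨ E2 = -1 := by rw [hE2]; split_ifs <;> simp
  have hE1pos : 0 < E1 * ee (h i) (rv (h j)) := by
    rw [hE1]; split_ifs with hc
    · simpa using hc
    · rcases lt_or_gt_of_ne hD1ne with hlt | hgt
      · nlinarith
      · exact absurd hgt hc
  have hE2pos : 0 < E2 * ee (h j) (rv (h i)) := by
    rw [hE2]; split_ifs with hc
    · simpa using hc
    · rcases lt_or_gt_of_ne hD2ne with hlt | hgt
      · nlinarith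
      · exact absurd hgt hc
  obtain ⟨W1', hW1'⟩ : ∃ W : V2, W = (si' * E1) • rv (h j) := ⟨_, rfl⟩
  obtain ⟨W2', hW2'⟩ : ∃ W : V2, W = (sj' * E2) • rv (h i) := ⟨_, rfl⟩
  have heeW1'i : si' * ee (h i) W1' = E1 * ee (h i) (rv (h j)) := by
    rw [hW1', ee_smul]
    have hr : si' * (si' * E1 * ee (h i) (rv (h j)))
        = (si' * si') * (E1 * ee (h i) (rv (h j))) := by ring
    rw [hr, pm_sq hsi'pm, one_mul]
  have heeW1'j : ee (h j) W1' = 0 := by rw [hW1', ee_smul, ee_rv_self, mul_zero]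
  have heeW2'j : sj' * ee (h j) W2' = E2 * ee (h j) (rv (h i)) := by
    rw [hW2', ee_smul]
    have hr : sj' * (sj' * E2 * ee (h j) (rv (h i)))
        = (sj' * sj') * (E2 * ee (h j) (rv (h i))) := by ring
    rw [hr, pm_sq hsj'pm, one_mul]
  have heeW2'i : ee (h i) W2' = 0 := by rw [hW2', ee_smul, ee_rv_self, mul_zero]
  have hWa_I : 0 < si' * ee (h i) (W1' + W2') := by
    rw [ee_add, heeW2'i, add_zero, heeW1'i]; exact hE1pos
  have hWa_J : 0 < sj' * ee (h j) (W1' + W2') := by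
    rw [ee_add, heeW1'j, zero_add, heeW2'j]; exact hE2pos
  have hlinW1'pos : 0 < lin W1' := by
    have h0 := ascend hε hSec' hminy hzi hzj hWa_I hWa_J
      (by rw [heeW1'i]; exact le_of_lt hE1pos)
      (by rw [heeW1'j, mul_zero])
    have hne : lin W1' ≠ 0 := by
      rw [hW1', lin_smul]
      exact mul_ne_zero (pm_ne_zero (pm_mul hsi'pm hE1pm)) hcj
    exact h0.lt_of_ne (Ne.symm hne)
  have hlinW2'pos : 0 < lin W2' := by
    have h0 := ascend hε hSec' hminy hzi hzj hWa_I hWa_J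
      (by rw [heeW2'i, mul_zero])
      (by rw [heeW2'j]; exact le_of_lt hE2pos)
    have hne : lin W2' ≠ 0 := by
      rw [hW2', lin_smul]
      exact mul_ne_zero (pm_ne_zero (pm_mul hsj'pm hE2pm)) hci
    exact h0.lt_of_ne (Ne.symm hne)
  have hs1 : si' * E1 = σ1 := by
    apply sign_eq' (pm_mul hsi'pm hE1pm) hσ1pm (c := lin (rv (h j)))
    · have hl : lin W1' = (si' * E1) * lin (rv (h j)) := by rw [hW1', lin_smul]
      rw [← hl]; exact hlinW1'pos
    · have hl : lin W1 = σ1 * lin (rv (h j)) := by rw [hW1, lin_smul]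
      rw [← hl]; exact hlinW1
  have hs2 : sj' * E2 = σ2 := by
    apply sign_eq' (pm_mul hsj'pm hE2pm) hσ2pm (c := lin (rv (h i)))
    · have hl : lin W2' = (sj' * E2) * lin (rv (h i)) := by rw [hW2', lin_smul]
      rw [← hl]; exact hlinW2'pos
    · have hl : lin W2 = σ2 * lin (rv (h i)) := by rw [hW2, lin_smul]
      rw [← hl]; exact hlinW2
  have hsi_eq : si' = si := by
    have hstar : 0 < si * (σ1 * ee (h i) (rv (h j))) := by rw [← heeW1i]; exact hstar_i
    rw [← hs1] at hstar
    have hr : si * (si' * E1 * ee (h i) (rv (h j)))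
        = (si * si') * (E1 * ee (h i) (rv (h j))) := by ring
    rw [hr] at hstar
    have h3 : 0 < si * si' := by nlinarith [hE1pos]
    exact (pm_eq_of_mul_pos hsipm hsi'pm h3).symm
  have hsj_eq : sj' = sj := by
    have hstar : 0 < sj * (σ2 * ee (h j) (rv (h i))) := by rw [← heeW2j]; exact hstar_j
    rw [← hs2] at hstar
    have hr : sj * (sj' * E2 * ee (h j) (rv (h i)))
        = (sj * sj') * (E2 * ee (h j) (rv (h i))) := by ring
    rw [hr] at hstar
    have h3 : 0 < sj * sj' := by nlinarith [hE2pos]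
    exact (pm_eq_of_mul_pos hsjpm hsj'pm h3).symm
  have hx₁y : x₁ ∈ connectedComponentIn (Ut h p) y := by
    apply hSec' x₁ hx₁dist
    · rw [hx₁, hvals_i t₁ t₁, hsi_eq]
      have he : si * ((mi:ℝ) + t₁ * ee (h i) W1 - mi) = t₁ * (si * ee (h i) W1) := by ring
      rw [he]
      exact mul_pos ht₁pos hstar_i
    · rw [hx₁, hvals_j t₁ t₁, hsj_eq]
      have he : sj * ((mj:ℝ) + t₁ * ee (h j) W2 - mj) = t₁ * (sj * ee (h j) W2) := by ring
      rw [he]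
      exact mul_pos ht₁pos hstar_j
  exact connectedComponentIn_eq hx₁y

end Arrangement
end S3
namespace S3
open Set

lemma continuous_torusMk : Continuous torusMk := continuous_quotient_mk'

lemma isOpenMap_torusMk : IsOpenMap torusMk := QuotientAddGroup.isOpenMap_coe

lemma closure_translate (w : V2) (C : Set V2) :
    closure ((fun y => y + w) '' C) = (fun y => y + w) '' closure C := by
  have he : (fun y : V2 => y + w) = (Homeomorph.addRight w : V2 → V2) := rfl
  rw [he, ← Homeomorph.image_closure]

lemma isMinOn_translate {w : V2} {S : Set V2} {z : V2} (hm : IsMinOn lin S z) :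
    IsMinOn lin ((fun y => y + w) '' S) (z + w) := by
  rw [isMinOn_iff] at hm ⊢
  rintro x ⟨c, hc, rfl⟩
  rw [lin_add, lin_add]
  have := hm c hc
  linarith

section Arrangement

variable {n : ℕ} {h : Fin n → Fin 2 → ℤ} {p : Fin n → Fin 2 → ℝ}
variable {L : Fin n → Set Torus2}

/-- saturation of an image by the lattice action -/
lemma preimage_image_torusMk (A : Set V2) :
    torusMk ⁻¹' (torusMk '' A) = ⋃ w : intLattice, (fun y => y + (w:V2)) '' A := by
  ext x
  simp only [mem_preimage, mem_image, mem_iUnion]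
  constructor
  · rintro ⟨a, ha, hax⟩
    have hmem : x - a ∈ intLattice := torusMk_eq.1 hax
    exact ⟨⟨x - a, hmem⟩, a, ha, by simp⟩
  · rintro ⟨⟨w, hw⟩, a, ha, hax⟩
    refine ⟨a, ha, ?_⟩
    rw [← hax]
    exact (torusMk_add_mem hw).symm

/-- the image under `torusMk` of a component of `Ut` is a component of the complement -/
lemma image_component (hL : ∀ i, L i = torusGeodesic (p i) (h i))
    (hprim : ∀ i, Int.gcd (h i 0) (h i 1) = 1)
    {x₁ : V2} (hx₁ : x₁ ∈ Ut h p) :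
    torusMk '' (connectedComponentIn (Ut h p) x₁)
      = connectedComponentIn ((⋃ i, L i)ᶜ) (torusMk x₁) := by
  classical
  have hpre : ∀ x : V2, x ∈ Ut h p ↔ torusMk x ∈ (⋃ i, L i)ᶜ := mem_Ut_iff h p hL hprim
  have hCopen : IsOpen (connectedComponentIn (Ut h p) x₁) :=
    (isOpen_Ut h p).connectedComponentIn
  have hCUt : connectedComponentIn (Ut h p) x₁ ⊆ Ut h p := connectedComponentIn_subset _ _
  have hx₁U : torusMk x₁ ∈ (⋃ i, L i)ᶜ := (hpre x₁).1 hx₁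
  -- forward inclusion
  have hfwd : torusMk '' (connectedComponentIn (Ut h p) x₁)
      ⊆ connectedComponentIn ((⋃ i, L i)ᶜ) (torusMk x₁) := by
    apply IsPreconnected.subset_connectedComponentIn
    · exact isPreconnected_connectedComponentIn.image _ continuous_torusMk.continuousOn
    · exact ⟨x₁, mem_connectedComponentIn hx₁, rfl⟩
    · rintro - ⟨c, hc, rfl⟩
      exact (hpre c).1 (hCUt hc)
  -- the saturation
  have hTsat := preimage_image_torusMk (connectedComponentIn (Ut h p) x₁)
  have hTsubUt : torusMk ⁻¹' (torusMk '' (connectedComponentIn (Ut h p) x₁)) ⊆ Ut h p := by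
    rw [hTsat]
    rintro x hx
    simp only [mem_iUnion] at hx
    obtain ⟨⟨w, hw⟩, c, hc, hcx⟩ := hx
    rw [← hcx]
    exact Ut_add_lattice h p hw (hCUt hc)
  have hCsubT : connectedComponentIn (Ut h p) x₁
      ⊆ torusMk ⁻¹' (torusMk '' (connectedComponentIn (Ut h p) x₁)) :=
    fun c hc => ⟨c, hc, rfl⟩
  have hTopen : IsOpen (torusMk ⁻¹' (torusMk '' (connectedComponentIn (Ut h p) x₁))) :=
    IsOpen.preimage continuous_torusMk (isOpenMap_torusMk _ hCopen)
  -- the complement of T in Ut is a union of components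
  have hTdisj : ∀ q ∈ (Ut h p) \ torusMk ⁻¹' (torusMk '' (connectedComponentIn (Ut h p) x₁)),
      Disjoint (connectedComponentIn (Ut h p) q)
        (torusMk ⁻¹' (torusMk '' (connectedComponentIn (Ut h p) x₁))) := by
    rintro q ⟨hqUt, hqT⟩
    rw [Set.disjoint_left]
    intro r hrq hrT
    apply hqT
    rw [hTsat] at hrT
    simp only [mem_iUnion] at hrT
    obtain ⟨⟨w, hw⟩, c, hc, hcr⟩ := hrT
    have he1 : connectedComponentIn (Ut h p) q = connectedComponentIn (Ut h p) r :=
      connectedComponentIn_eq hrq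
    have he2 : connectedComponentIn (Ut h p) x₁ = connectedComponentIn (Ut h p) c :=
      connectedComponentIn_eq hc
    have hcr' : c + w = r := hcr
    have he3 : connectedComponentIn (Ut h p) r = (fun y => y + w) ''
        connectedComponentIn (Ut h p) x₁ := by
      rw [he2, connectedComponentIn_add_lattice hw c, hcr']
    have hqr : q ∈ connectedComponentIn (Ut h p) r := by
      rw [← he1]; exact mem_connectedComponentIn hqUt
    rw [he3] at hqr
    obtain ⟨c', hc', hcq⟩ := hqr
    rw [hTsat]
    simp only [mem_iUnion]
    exact ⟨⟨w, hw⟩, c', hc', hcq⟩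
  have hVopen : IsOpen ((Ut h p) \ torusMk ⁻¹' (torusMk '' (connectedComponentIn (Ut h p) x₁))) :=
    diff_connectedComponentIn_isOpen (isOpen_Ut h p) _ hTdisj
  -- disjointness downstairs
  have hdisj : ∀ u : Torus2, u ∈ torusMk '' (connectedComponentIn (Ut h p) x₁) →
      u ∈ torusMk '' ((Ut h p) \ torusMk ⁻¹' (torusMk '' (connectedComponentIn (Ut h p) x₁))) →
      False := by
    rintro u hu1 ⟨b, ⟨hbUt, hbT⟩, hbu⟩
    exact hbT (by rw [mem_preimage, hbu]; exact hu1)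
  -- covering
  have hcover : connectedComponentIn ((⋃ i, L i)ᶜ) (torusMk x₁)
      ⊆ torusMk '' (connectedComponentIn (Ut h p) x₁)
        ∪ torusMk '' ((Ut h p) \ torusMk ⁻¹' (torusMk '' (connectedComponentIn (Ut h p) x₁))) := by
    intro u hu
    have huU : u ∈ (⋃ i, L i)ᶜ := connectedComponentIn_subset _ _ hu
    obtain ⟨x, rfl⟩ := torusMk_surjective u
    have hxUt : x ∈ Ut h p := (hpre x).2 huU
    by_cases hxT : x ∈ torusMk ⁻¹' (torusMk '' (connectedComponentIn (Ut h p) x₁))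
    · exact Or.inl hxT
    · exact Or.inr ⟨x, ⟨hxUt, hxT⟩, rfl⟩
  -- preconnectedness argument
  have hpc : IsPreconnected (connectedComponentIn ((⋃ i, L i)ᶜ) (torusMk x₁)) :=
    isPreconnected_connectedComponentIn
  have hne1 : (connectedComponentIn ((⋃ i, L i)ᶜ) (torusMk x₁)
      ∩ torusMk '' (connectedComponentIn (Ut h p) x₁)).Nonempty :=
    ⟨torusMk x₁, mem_connectedComponentIn hx₁U, x₁, mem_connectedComponentIn hx₁, rfl⟩
  have hbwd : connectedComponentIn ((⋃ i, L i)ᶜ) (torusMk x₁)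
      ⊆ torusMk '' (connectedComponentIn (Ut h p) x₁) := by
    by_contra hcon
    obtain ⟨u, hu, huT⟩ := not_subset.1 hcon
    have hu2 : u ∈ torusMk '' ((Ut h p) \ torusMk ⁻¹'
        (torusMk '' (connectedComponentIn (Ut h p) x₁))) := by
      rcases hcover hu with hc | hc
      · exact absurd hc huT
      · exact hc
    have hne2 : (connectedComponentIn ((⋃ i, L i)ᶜ) (torusMk x₁)
        ∩ torusMk '' ((Ut h p) \ torusMk ⁻¹'
          (torusMk '' (connectedComponentIn (Ut h p) x₁)))).Nonempty := ⟨u, hu, hu2⟩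
    obtain ⟨u', hu', hu'1, hu'2⟩ := hpc _ _
      (isOpenMap_torusMk _ hCopen) (isOpenMap_torusMk _ hVopen) hcover hne1 hne2
    exact hdisj u' hu'1 hu'2
  exact Subset.antisymm hfwd hbwd

/-- two components with the same image differ by a lattice translation -/
lemma component_translate {x₁ x₂ : V2} (hx₂ : x₂ ∈ Ut h p)
    (heq : torusMk '' connectedComponentIn (Ut h p) x₁
      = torusMk '' connectedComponentIn (Ut h p) x₂) :
    ∃ w ∈ intLattice, connectedComponentIn (Ut h p) x₂
      = (fun y => y + w) '' connectedComponentIn (Ut h p) x₁ := by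
  have hx₂img : torusMk x₂ ∈ torusMk '' connectedComponentIn (Ut h p) x₂ :=
    ⟨x₂, mem_connectedComponentIn hx₂, rfl⟩
  rw [← heq] at hx₂img
  obtain ⟨c, hc, hcx⟩ := hx₂img
  have hw : x₂ - c ∈ intLattice := torusMk_eq.1 hcx
  refine ⟨x₂ - c, hw, ?_⟩
  have he2 : connectedComponentIn (Ut h p) x₁ = connectedComponentIn (Ut h p) c :=
    connectedComponentIn_eq hc
  have hcw : c + (x₂ - c) = x₂ := by abel
  rw [he2, connectedComponentIn_add_lattice hw c, hcw]

/-- closures of components are compact -/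
lemma closure_component_compact {i0 j0 : Fin n}
    (hd : h i0 0 * h j0 1 - h i0 1 * h j0 0 ≠ 0)
    {x₁ : V2} (hx₁ : x₁ ∈ Ut h p) :
    IsCompact (closure (connectedComponentIn (Ut h p) x₁)) := by
  refine Metric.isCompact_of_isClosed_isBounded isClosed_closure ?_
  apply Bornology.IsBounded.closure
  have hpre : IsPreconnected (connectedComponentIn (Ut h p) x₁) :=
    isPreconnected_connectedComponentIn
  have hsub : connectedComponentIn (Ut h p) x₁ ⊆ Ut h p := connectedComponentIn_subset _ _
  have hmem : x₁ ∈ connectedComponentIn (Ut h p) x₁ := mem_connectedComponentIn hx₁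
  have hinti := ee_interval hpre hsub hmem i0
  have hintj := ee_interval hpre hsub hmem j0
  apply bounded_of_ee_bounds hd
    (Bi := |(⌊ee (h i0) (x₁ - p i0)⌋ : ℝ)| + 1 + |ee (h i0) (p i0)|)
    (Bj := |(⌊ee (h j0) (x₁ - p j0)⌋ : ℝ)| + 1 + |ee (h j0) (p j0)|)
  · intro x hx
    obtain ⟨h1, h2⟩ := hinti x hx
    have hdecomp : ee (h i0) x = ee (h i0) (x - p i0) + ee (h i0) (p i0) := by
      rw [ee_sub]; ring
    rw [hdecomp]
    calc |ee (h i0) (x - p i0) + ee (h i0) (p i0)|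
        ≤ |ee (h i0) (x - p i0)| + |ee (h i0) (p i0)| := abs_add_le _ _
      _ ≤ (|(⌊ee (h i0) (x₁ - p i0)⌋ : ℝ)| + 1) + |ee (h i0) (p i0)| := by
          have hb : |ee (h i0) (x - p i0)| ≤ |(⌊ee (h i0) (x₁ - p i0)⌋ : ℝ)| + 1 := by
            rw [abs_le]
            constructor
            · have := neg_abs_le ((⌊ee (h i0) (x₁ - p i0)⌋ : ℝ))
              linarith
            · have := le_abs_self ((⌊ee (h i0) (x₁ - p i0)⌋ : ℝ))
              linarith
          linarith
      _ = _ := by ring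
  · intro x hx
    obtain ⟨h1, h2⟩ := hintj x hx
    have hdecomp : ee (h j0) x = ee (h j0) (x - p j0) + ee (h j0) (p j0) := by
      rw [ee_sub]; ring
    rw [hdecomp]
    calc |ee (h j0) (x - p j0) + ee (h j0) (p j0)|
        ≤ |ee (h j0) (x - p j0)| + |ee (h j0) (p j0)| := abs_add_le _ _
      _ ≤ (|(⌊ee (h j0) (x₁ - p j0)⌋ : ℝ)| + 1) + |ee (h j0) (p j0)| := by
          have hb : |ee (h j0) (x - p j0)| ≤ |(⌊ee (h j0) (x₁ - p j0)⌋ : ℝ)| + 1 := by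
            rw [abs_le]
            constructor
            · have := neg_abs_le ((⌊ee (h j0) (x₁ - p j0)⌋ : ℝ))
              linarith
            · have := le_abs_self ((⌊ee (h j0) (x₁ - p j0)⌋ : ℝ))
              linarith
          linarith
      _ = _ := by ring

end Arrangement
end S3
open S3 Set in
/-- For a line arrangement in general position on the torus, the number
of intersection points equals the number of connected components of the complement. -/
theorem stmt_3 (n : ℕ) (h : Fin n → Fin 2 → ℤ) (p : Fin n → Fin 2 → ℝ)
    (L : Fin n → Set Torus2) (hL : ∀ i, L i = torusGeodesic (p i) (h i))
    (hprim : ∀ i, Int.gcd (h i 0) (h i 1) = 1)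
    (hthree : ∀ x : Torus2, {i : Fin n | x ∈ L i}.ncard ≤ 2)
    (hpar : ∀ i j, i ≠ j → (h i = h j ∨ h i = -h j) → Disjoint (L i) (L j))
    (hnpar : ∃ i j, h i ≠ h j ∧ h i ≠ -h j) :
    {x : Torus2 | ∃ i j, i ≠ j ∧ x ∈ L i ∧ x ∈ L j}.Finite ∧
    {s : Set Torus2 | ∃ x ∈ (⋃ i, L i)ᶜ, s = connectedComponentIn (⋃ i, L i)ᶜ x}.Finite ∧
    {x : Torus2 | ∃ i j, i ≠ j ∧ x ∈ L i ∧ x ∈ L j}.ncard =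
      {s : Set Torus2 | ∃ x ∈ (⋃ i, L i)ᶜ, s = connectedComponentIn (⋃ i, L i)ᶜ x}.ncard := by
  classical
  obtain ⟨i0, j0, hne1, hne2⟩ := hnpar
  have hd0 : h i0 0 * h j0 1 - h i0 1 * h j0 0 ≠ 0 := by
    intro hc
    rcases prim_parallel (hprim i0) (hprim j0) hc with hcc | hcc
    · exact hne1 hcc
    · exact hne2 hcc
  have hVfin := finite_vertexSet hL hprim hpar
  have hex : ∀ v : Torus2, ∃ x₁ z : V2,
      v ∈ {x : Torus2 | ∃ i j, i ≠ j ∧ x ∈ L i ∧ x ∈ L j} →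
      (x₁ ∈ Ut h p ∧ torusMk z = v ∧
       z ∈ closure (connectedComponentIn (Ut h p) x₁) ∧
       IsMinOn lin (closure (connectedComponentIn (Ut h p) x₁)) z ∧
       (∀ x ∈ closure (connectedComponentIn (Ut h p) x₁), lin x = lin z → x = z) ∧
       (∀ y, y ∈ Ut h p → z ∈ closure (connectedComponentIn (Ut h p) y) →
         IsMinOn lin (closure (connectedComponentIn (Ut h p) y)) z →
         connectedComponentIn (Ut h p) y = connectedComponentIn (Ut h p) x₁)) := by
    intro v
    by_cases hv : v ∈ {x : Torus2 | ∃ i j, i ≠ j ∧ x ∈ L i ∧ x ∈ L j}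
    · obtain ⟨i, j, hij, hvi, hvj⟩ := hv
      obtain ⟨z, rfl⟩ := torusMk_surjective v
      obtain ⟨mi, hmi⟩ := (mem_L_iff h p hL hprim i z).1 hvi
      obtain ⟨mj, hmj⟩ := (mem_L_iff h p hL hprim j z).1 hvj
      obtain ⟨x₁, hx₁Ut, hzcl, hmin, huniq, hcomp⟩ :=
        vertex_core hL hprim hthree hpar hij hmi hmj
      exact ⟨x₁, z, fun _ => ⟨hx₁Ut, rfl, hzcl, hmin, huniq, hcomp⟩⟩
    · exact ⟨0, 0, fun hc => absurd hc hv⟩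
  choose X Z hXZ using hex
  have hface : ∀ v ∈ {x : Torus2 | ∃ i j, i ≠ j ∧ x ∈ L i ∧ x ∈ L j},
      torusMk '' connectedComponentIn (Ut h p) (X v)
        = connectedComponentIn ((⋃ i, L i)ᶜ) (torusMk (X v)) ∧
      torusMk (X v) ∈ (⋃ i, L i)ᶜ := by
    intro v hv
    obtain ⟨hx₁Ut, -, -, -, -, -⟩ := hXZ v hv
    exact ⟨image_component hL hprim hx₁Ut, (mem_Ut_iff h p hL hprim (X v)).1 hx₁Ut⟩
  have hinj : Set.InjOn (fun v => torusMk '' connectedComponentIn (Ut h p) (X v))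
      {x : Torus2 | ∃ i j, i ≠ j ∧ x ∈ L i ∧ x ∈ L j} := by
    intro v1 hv1 v2 hv2 hFeq
    obtain ⟨hUt1, hz1, hcl1, hmin1, huniq1, hcomp1⟩ := hXZ v1 hv1
    obtain ⟨hUt2, hz2, hcl2, hmin2, huniq2, hcomp2⟩ := hXZ v2 hv2
    obtain ⟨w, hw, hC2⟩ := component_translate hUt2 hFeq
    have hcl2' : Z v1 + w ∈ closure (connectedComponentIn (Ut h p) (X v2)) := by
      rw [hC2, closure_translate]
      exact ⟨Z v1, hcl1, rfl⟩
    have hmin2' : IsMinOn lin (closure (connectedComponentIn (Ut h p) (X v2))) (Z v1 + w) := by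
      rw [hC2, closure_translate]
      exact isMinOn_translate hmin1
    have hlineq : lin (Z v1 + w) = lin (Z v2) :=
      le_antisymm (isMinOn_iff.1 hmin2' (Z v2) hcl2) (isMinOn_iff.1 hmin2 (Z v1 + w) hcl2')
    have hzz : Z v1 + w = Z v2 := huniq2 (Z v1 + w) hcl2' hlineq
    rw [← hz1, ← hz2, ← hzz, torusMk_add_mem hw]
  have hsurj : ∀ D ∈ {s : Set Torus2 | ∃ x ∈ (⋃ i, L i)ᶜ,
      s = connectedComponentIn (⋃ i, L i)ᶜ x},
      ∃ v ∈ {x : Torus2 | ∃ i j, i ≠ j ∧ x ∈ L i ∧ x ∈ L j},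
        torusMk '' connectedComponentIn (Ut h p) (X v) = D := by
    rintro D ⟨u, hu, rfl⟩
    obtain ⟨xt, rfl⟩ := torusMk_surjective u
    have hxtUt : xt ∈ Ut h p := (mem_Ut_iff h p hL hprim xt).2 hu
    have hcompact := closure_component_compact hd0 hxtUt
    have hclne : (closure (connectedComponentIn (Ut h p) xt)).Nonempty :=
      ⟨xt, subset_closure (mem_connectedComponentIn hxtUt)⟩
    obtain ⟨z, hzcl, hzmin⟩ := hcompact.exists_isMinOn hclne continuous_lin.continuousOn
    obtain ⟨i, j, mi, mj, hij, hzi, hzj⟩ := min_is_vertex hL hprim hthree hxtUt hzcl hzmin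
    have hvV : torusMk z ∈ {x : Torus2 | ∃ i j, i ≠ j ∧ x ∈ L i ∧ x ∈ L j} :=
      ⟨i, j, hij, (mem_L_iff h p hL hprim i z).2 ⟨mi, hzi⟩,
        (mem_L_iff h p hL hprim j z).2 ⟨mj, hzj⟩⟩
    refine ⟨torusMk z, hvV, ?_⟩
    obtain ⟨hUtv, hzv, hclv, hminv, huniqv, hcompv⟩ := hXZ (torusMk z) hvV
    have hwmem : Z (torusMk z) - z ∈ intLattice := by
      have h1 := torusMk_eq.1 hzv
      have h2 := neg_mem h1
      rwa [neg_sub] at h2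
    have hyUt : xt + (Z (torusMk z) - z) ∈ Ut h p := Ut_add_lattice h p hwmem hxtUt
    have hcompxtw : connectedComponentIn (Ut h p) (xt + (Z (torusMk z) - z))
        = (fun y => y + (Z (torusMk z) - z)) '' connectedComponentIn (Ut h p) xt :=
      (connectedComponentIn_add_lattice hwmem xt).symm
    have hclY : Z (torusMk z)
        ∈ closure (connectedComponentIn (Ut h p) (xt + (Z (torusMk z) - z))) := by
      rw [hcompxtw, closure_translate]
      refine ⟨z, hzcl, ?_⟩
      show z + (Z (torusMk z) - z) = Z (torusMk z)
      rw [add_comm, sub_add_cancel]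
    have hminY : IsMinOn lin
        (closure (connectedComponentIn (Ut h p) (xt + (Z (torusMk z) - z))))
        (Z (torusMk z)) := by
      rw [hcompxtw, closure_translate]
      have hmt := isMinOn_translate (w := Z (torusMk z) - z) hzmin
      have heq : z + (Z (torusMk z) - z) = Z (torusMk z) := by rw [add_comm, sub_add_cancel]
      rwa [heq] at hmt
    have hfinal := hcompv (xt + (Z (torusMk z) - z)) hyUt hclY hminY
    rw [← hfinal, hcompxtw, ← image_component hL hprim hxtUt, ← Set.image_comp]
    exact Set.image_congr' (fun c => torusMk_add_mem hwmem)
  have hFS_eq : {s : Set Torus2 | ∃ x ∈ (⋃ i, L i)ᶜ, s = connectedComponentIn (⋃ i, L i)ᶜ x}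
      = (fun v => torusMk '' connectedComponentIn (Ut h p) (X v)) ''
        {x : Torus2 | ∃ i j, i ≠ j ∧ x ∈ L i ∧ x ∈ L j} := by
    apply Set.Subset.antisymm
    · intro D hD
      obtain ⟨v, hv, hvD⟩ := hsurj D hD
      exact ⟨v, hv, hvD⟩
    · rintro - ⟨v, hv, rfl⟩
      obtain ⟨him, hmem⟩ := hface v hv
      exact ⟨torusMk (X v), hmem, him⟩
  refine ⟨hVfin, ?_, ?_⟩
  · rw [hFS_eq]
    exact hVfin.image _
  · rw [hFS_eq]
    exact (Set.ncard_image_of_injOn hinj).symm
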